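/- arXiv:2403.02064 — 6 statements merged into one kernel-verified Lean document; each statement's English description precedes it below -/
import Mathlib

section
/- Let H be an r-uniform hypergraph and let ∂H be its 2-shadow multigraph. Then ρ(H) ≤ ρ(∂H)/(r−1), where ρ(H) is the spectral radius of the adjacency tensor of H and ρ(∂H) is the spectral radius of the adjacency matrix of ∂H. -/
open Finset

variable {V : Type*} [Fintype V] [DecidableEq V]

/-- The degree of a vertex: the number of hyperedges containing it. -/
def hdeg (E : Finset (Finset V)) (v : V) : ℕ :=
  (E.filter (fun e => v ∈ e)).card

open Classical in
/-- The neighborhood of a vertex: vertices at distance exactly one. -/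
noncomputable def nbrs (E : Finset (Finset V)) (v : V) : Finset V :=
  Finset.univ.filter (fun u => u ≠ v ∧ ∃ e ∈ E, v ∈ e ∧ u ∈ e)

/-- `E` is the edge set of an `r`-uniform hypergraph. -/
def Uniform (E : Finset (Finset V)) (r : ℕ) : Prop := ∀ e ∈ E, e.card = r

/-- A hypergraph is linear if any two distinct edges share at most one vertex. -/
def LinearH (E : Finset (Finset V)) : Prop :=
  ∀ e₁ ∈ E, ∀ e₂ ∈ E, e₁ ≠ e₂ → (e₁ ∩ e₂).card ≤ 1

/-- `lam` is an eigenvalue of the adjacency tensor of the `r`-uniform hypergraph `E`: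
there is a nonzero complex vector `x` with `A(H) x^{r-1} = lam x^{[r-1]}`. -/
def IsAdjEigenvalue (E : Finset (Finset V)) (r : ℕ) (lam : ℂ) : Prop :=
  ∃ x : V → ℂ, x ≠ 0 ∧ ∀ v : V,
    ∑ e ∈ E.filter (fun e => v ∈ e), ∏ u ∈ e.erase v, x u = lam * (x v) ^ (r - 1)

/-- The spectral radius of the adjacency tensor: max modulus of eigenvalues. -/
noncomputable def specRad (E : Finset (Finset V)) (r : ℕ) : ℝ :=
  sSup {z : ℝ | ∃ lam : ℂ, IsAdjEigenvalue E r lam ∧ z = ‖lam‖}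

/-- The adjacency matrix of the 2-shadow multigraph of `E`. -/
noncomputable def shadowMatrix (E : Finset (Finset V)) : Matrix V V ℝ :=
  fun u v => if u = v then 0 else ((E.filter (fun e => u ∈ e ∧ v ∈ e)).card : ℝ)

/-- The spectral radius of a real matrix: max modulus of complex eigenvalues. -/
noncomputable def matSpecRad (A : Matrix V V ℝ) : ℝ :=
  sSup {z : ℝ | ∃ (lam : ℂ) (x : V → ℂ), x ≠ 0 ∧
    (A.map (Complex.ofReal)).mulVec x = lam • x ∧ z = ‖lam‖}

/-- The number of 1-walks starting at `u`: pairs `(e, v)` with `u ∈ e`, `v ∈ e`, `v ≠ u`. -/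
def w1 (E : Finset (Finset V)) (u : V) : ℕ :=
  ((E ×ˢ (univ : Finset V)).filter
    (fun p => u ∈ p.1 ∧ p.2 ∈ p.1 ∧ p.2 ≠ u)).card

/-- The number of 2-walks starting at `u`. -/
def w2 (E : Finset (Finset V)) (u : V) : ℕ :=
  (((E ×ˢ (univ : Finset V)) ×ˢ (E ×ˢ (univ : Finset V))).filter
    (fun p => u ∈ p.1.1 ∧ p.1.2 ∈ p.1.1 ∧ p.1.2 ≠ u ∧
      p.1.2 ∈ p.2.1 ∧ p.2.2 ∈ p.2.1 ∧ p.2.2 ≠ p.1.2)).card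

/-- `E` contains a Berge triangle. -/
def HasBergeC3 (E : Finset (Finset V)) : Prop :=
  ∃ e₁ ∈ E, ∃ e₂ ∈ E, ∃ e₃ ∈ E, ∃ v₁ v₂ v₃ : V,
    e₁ ≠ e₂ ∧ e₂ ≠ e₃ ∧ e₁ ≠ e₃ ∧ v₁ ≠ v₂ ∧ v₂ ≠ v₃ ∧ v₁ ≠ v₃ ∧
    v₁ ∈ e₁ ∧ v₂ ∈ e₁ ∧ v₂ ∈ e₂ ∧ v₃ ∈ e₂ ∧ v₃ ∈ e₃ ∧ v₁ ∈ e₃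

/-- `E` contains a Berge-`K_{s,t}`: disjoint vertex sets `S`, `T` of sizes `s`, `t`
and an injective assignment of distinct hyperedges to the pairs. -/
def HasBergeKst (E : Finset (Finset V)) (s t : ℕ) : Prop :=
  ∃ (S T : Finset V) (f : V → V → Finset V),
    S.card = s ∧ T.card = t ∧ Disjoint S T ∧
    (∀ a ∈ S, ∀ b ∈ T, f a b ∈ E ∧ a ∈ f a b ∧ b ∈ f a b) ∧
    (∀ a ∈ S, ∀ b ∈ T, ∀ a' ∈ S, ∀ b' ∈ T, f a b = f a' b' → a = a' ∧ b = b')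

/-- `E` contains a Berge-`K_{s,t}` with the `s`-side inside `V₁` and the `t`-side
inside `V₂`. -/
def HasBergeKstIn (E : Finset (Finset V)) (s t : ℕ) (V₁ V₂ : Finset V) : Prop :=
  ∃ (S T : Finset V) (f : V → V → Finset V),
    S ⊆ V₁ ∧ T ⊆ V₂ ∧ S.card = s ∧ T.card = t ∧ Disjoint S T ∧
    (∀ a ∈ S, ∀ b ∈ T, f a b ∈ E ∧ a ∈ f a b ∧ b ∈ f a b) ∧
    (∀ a ∈ S, ∀ b ∈ T, ∀ a' ∈ S, ∀ b' ∈ T, f a b = f a' b' → a = a' ∧ b = b')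

/-- `E` is hm-bipartite with head part `V₁` and mass part `V₂`: each edge meets
`V₁` in exactly one vertex and `V₂` in the other `r−1` vertices. -/
def HmBipartite (E : Finset (Finset V)) (r : ℕ) (V₁ V₂ : Finset V) : Prop :=
  Disjoint V₁ V₂ ∧ V₁ ∪ V₂ = Finset.univ ∧
  ∀ e ∈ E, (e ∩ V₁).card = 1 ∧ (e ∩ V₂).card = r - 1

/-- The generalized binomial coefficient `C(x, k) = x(x−1)⋯(x−k+1)/k!` for real `x`. -/
noncomputable def genBinom (x : ℝ) (k : ℕ) : ℝ :=
  (descPochhammer ℝ k).eval x / (Nat.factorial k)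

section AuxStmt4

variable {V : Type*} [Fintype V] [DecidableEq V]

lemma matSpecRad_nonneg' (A : Matrix V V ℝ) : 0 ≤ matSpecRad A := by
  apply Real.sSup_nonneg
  rintro z ⟨lam, x, _, _, rfl⟩
  exact norm_nonneg _

lemma matSpecRad_bdd' (A : Matrix V V ℝ) :
    BddAbove {z : ℝ | ∃ (lam : ℂ) (x : V → ℂ), x ≠ 0 ∧
      (A.map (Complex.ofReal)).mulVec x = lam • x ∧ z = ‖lam‖} := by
  refine ⟨∑ i, ∑ j, |A i j|, ?_⟩
  rintro z ⟨lam, x, hx0, hev, rfl⟩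
  obtain ⟨j0, hj0⟩ : ∃ j, x j ≠ 0 := Function.ne_iff.mp hx0
  have hne : (Finset.univ : Finset V).Nonempty := ⟨j0, Finset.mem_univ _⟩
  obtain ⟨i, -, hi⟩ := Finset.exists_max_image Finset.univ (fun i => ‖x i‖) hne
  have hxi : 0 < ‖x i‖ :=
    lt_of_lt_of_le (by simpa using hj0) (hi j0 (Finset.mem_univ _))
  have h1 : ‖lam‖ * ‖x i‖
      = ‖((A.map (Complex.ofReal)).mulVec x) i‖ := by
    rw [hev]; simp [norm_mul]
  have h2 : ‖((A.map (Complex.ofReal)).mulVec x) i‖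
      ≤ (∑ j, |A i j|) * ‖x i‖ := by
    rw [Matrix.mulVec, dotProduct, Finset.sum_mul]
    refine le_trans (norm_sum_le _ _) (Finset.sum_le_sum fun j _ => ?_)
    rw [norm_mul]
    simp only [Matrix.map_apply, Complex.norm_real, Real.norm_eq_abs]
    exact mul_le_mul_of_nonneg_left (hi j (Finset.mem_univ _)) (abs_nonneg _)
  have hrow : (∑ j, |A i j|) ≤ ∑ i, ∑ j, |A i j| :=
    Finset.single_le_sum (f := fun i => ∑ j, |A i j|)
      (fun _ _ => Finset.sum_nonneg fun _ _ => abs_nonneg _) (Finset.mem_univ i)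
  have := le_trans (le_of_eq h1) h2
  calc ‖lam‖ ≤ ∑ j, |A i j| := by
        exact le_of_mul_le_mul_right this hxi
    _ ≤ _ := hrow

end AuxStmt4
set_option linter.unusedSectionVars false
section AuxStmt4b

variable {V : Type*} [Fintype V] [DecidableEq V]

lemma shadow_isHermitian (E : Finset (Finset V)) : (shadowMatrix E).IsHermitian := by
  ext u v
  simp only [Matrix.conjTranspose_apply, shadowMatrix, star_trivial]
  by_cases h : u = v
  · simp [h]
  · rw [if_neg (Ne.symm h), if_neg h]
    congr 2
    ext e
    simp only [Finset.mem_filter]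
    tauto

lemma quad_le_matSpecRad (A : Matrix V V ℝ) (hsym : A.IsHermitian) (z : V → ℝ) :
    ∑ u, ∑ v, A u v * z u * z v ≤ matSpecRad A * ∑ v, z v ^ 2 := by
  rcases isEmpty_or_nonempty V with hV | hV
  · simp
  by_cases hz : z = 0
  · simp [hz]
  set T : EuclideanSpace ℝ V →ₗ[ℝ] EuclideanSpace ℝ V := Matrix.toEuclideanLin A with hT
  have hTsym : T.IsSymmetric := Matrix.isHermitian_iff_isSymmetric.mp hsym
  -- Bound for Rayleigh quotients
  obtain ⟨C, hC⟩ : ∃ C : ℝ, ∀ x : EuclideanSpace ℝ V, x ≠ 0 →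
      (inner ℝ (T x) x) / ‖x‖ ^ 2 ≤ C := by
    refine ⟨‖LinearMap.toContinuousLinearMap T‖, fun x hx => ?_⟩
    have hx0 : (0:ℝ) < ‖x‖ := norm_pos_iff.mpr hx
    have hx2 : (0:ℝ) < ‖x‖ ^ 2 := by positivity
    rw [div_le_iff₀ hx2]
    calc (inner ℝ (T x) x) ≤ ‖T x‖ * ‖x‖ := real_inner_le_norm _ _
      _ ≤ ‖LinearMap.toContinuousLinearMap T‖ * ‖x‖ * ‖x‖ := by
          have := (LinearMap.toContinuousLinearMap T).le_opNorm x
          exact mul_le_mul_of_nonneg_right (by simpa using this) (norm_nonneg _)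
      _ = ‖LinearMap.toContinuousLinearMap T‖ * ‖x‖ ^ 2 := by ring
  have hbdd : BddAbove (Set.range fun x : {x : EuclideanSpace ℝ V // x ≠ 0} =>
      RCLike.re (inner ℝ (T x) (x : EuclideanSpace ℝ V)) / ‖(x : EuclideanSpace ℝ V)‖ ^ 2) := by
    refine ⟨C, ?_⟩
    rintro t ⟨⟨x, hx⟩, rfl⟩
    simpa using hC x hx
  set μ : ℝ := ⨆ x : {x : EuclideanSpace ℝ V // x ≠ 0},
      RCLike.re (inner ℝ (T x) (x : EuclideanSpace ℝ V)) / ‖(x : EuclideanSpace ℝ V)‖ ^ 2 with hμ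
  have hev : Module.End.HasEigenvalue T μ := hTsym.hasEigenvalue_iSup_of_finiteDimensional
  obtain ⟨v, hv⟩ := hev.exists_hasEigenvector
  have hv0 : v ≠ 0 := hv.right
  have hTv : T v = μ • v := hv.apply_eq_smul
  -- translate to a matrix eigenvector statement
  have hmul : A.mulVec (fun j => v j) = fun i => μ * v i := by
    have h := hTv
    rw [hT, Matrix.toEuclideanLin_apply] at h
    funext i
    have := congrArg (fun w => (WithLp.equiv 2 (V → ℝ)) w i) h
    simpa using this
  -- complex eigenpair, so |μ| ≤ matSpecRad A
  have hmu_le : |μ| ≤ matSpecRad A := by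
    apply le_csSup (matSpecRad_bdd' A)
    refine ⟨(μ : ℂ), fun i => (v i : ℂ), ?_, ?_, by simp⟩
    · obtain ⟨j, hj⟩ : ∃ j, v j ≠ 0 := by
        by_contra h
        push_neg at h
        exact hv0 (by ext j; simpa using h j)
      intro hcon
      exact hj (by simpa using congrFun hcon j)
    · funext i
      have h1 := congrFun hmul i
      simp only [Matrix.mulVec, dotProduct] at h1
      have h2 := congrArg (Complex.ofReal) h1
      rw [Complex.ofReal_sum] at h2
      push_cast at h2
      simp only [Matrix.mulVec, dotProduct, Matrix.map_apply, Pi.smul_apply,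
        smul_eq_mul]
      exact h2
  -- Rayleigh quotient of z
  set zE : EuclideanSpace ℝ V := (WithLp.equiv 2 (V → ℝ)).symm z with hzE
  have hzEfun : ∀ i, zE i = z i := fun i => rfl
  have hzE0 : zE ≠ 0 := by
    intro h
    apply hz
    funext i
    have := congrArg (fun w => (WithLp.equiv 2 (V → ℝ)) w i) h
    rw [← hzEfun i]; simpa using this
  have hray : (inner ℝ (T zE) zE) / ‖zE‖ ^ 2 ≤ μ := by
    have := le_ciSup hbdd ⟨zE, hzE0⟩
    simpa [hμ] using this
  have hzE2 : (0:ℝ) < ‖zE‖ ^ 2 := by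
    have : (0:ℝ) < ‖zE‖ := norm_pos_iff.mpr hzE0
    positivity
  have hnorm : ‖zE‖ ^ 2 = ∑ i, z i ^ 2 := by
    rw [← real_inner_self_eq_norm_sq, PiLp.inner_apply]
    apply Finset.sum_congr rfl
    intro i _
    rw [hzEfun i]
    simp [RCLike.inner_apply, sq]
  have hinner : (inner ℝ (T zE) zE) = ∑ u, ∑ w, A u w * z u * z w := by
    rw [hT, Matrix.toEuclideanLin_apply, PiLp.inner_apply]
    simp only [RCLike.inner_apply, starRingEnd_apply, star_trivial,
      WithLp.equiv_symm_apply, WithLp.ofLp_toLp, Equiv.apply_symm_apply, hzE, Matrix.mulVec,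
      dotProduct]
    apply Finset.sum_congr rfl
    intro u _
    rw [Finset.mul_sum]
    apply Finset.sum_congr rfl
    intro w _
    ring
  calc ∑ u, ∑ w, A u w * z u * z w = (inner ℝ (T zE) zE) := hinner.symm
    _ ≤ μ * ‖zE‖ ^ 2 := (div_le_iff₀ hzE2).mp hray
    _ ≤ matSpecRad A * ‖zE‖ ^ 2 :=
        mul_le_mul_of_nonneg_right (le_trans (le_abs_self μ) hmu_le) hzE2.le
    _ = matSpecRad A * ∑ w, z w ^ 2 := by rw [hnorm]

end AuxStmt4b
section AuxStmt4c

variable {V : Type*} [Fintype V] [DecidableEq V]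

lemma shadow_quad (E : Finset (Finset V)) (z : V → ℝ) :
    ∑ e ∈ E, ∑ u ∈ e, ∑ v ∈ e.erase u, z u * z v
      = ∑ u, ∑ v, shadowMatrix E u v * z u * z v := by
  have key : ∀ u v : V, shadowMatrix E u v * z u * z v
      = ∑ e ∈ E, if u ∈ e ∧ v ∈ e ∧ v ≠ u then z u * z v else 0 := by
    intro u v
    by_cases huv : u = v
    · subst huv
      simp [shadowMatrix]
    · simp only [shadowMatrix, if_neg huv]
      rw [Finset.card_filter]
      push_cast
      rw [Finset.sum_mul, Finset.sum_mul]
      apply Finset.sum_congr rfl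
      intro e _
      by_cases h : u ∈ e ∧ v ∈ e
      · rw [if_pos h, if_pos ⟨h.1, h.2, fun hc => huv hc.symm⟩, one_mul]
      · rw [if_neg h, if_neg (by tauto), zero_mul, zero_mul]
  have key2 : ∀ e : Finset V, ∑ u ∈ e, ∑ v ∈ e.erase u, z u * z v
      = ∑ u : V, ∑ v : V, if u ∈ e ∧ v ∈ e ∧ v ≠ u then z u * z v else 0 := by
    intro e
    calc ∑ u ∈ e, ∑ v ∈ e.erase u, z u * z v
        = ∑ u ∈ e, ∑ v : V, if v ∈ e.erase u then z u * z v else 0 := by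
          refine Finset.sum_congr rfl fun u _ => ?_
          rw [Finset.sum_ite_mem, Finset.univ_inter]
      _ = ∑ u : V, if u ∈ e then ∑ v : V, (if v ∈ e.erase u then z u * z v else 0) else 0 := by
          rw [Finset.sum_ite_mem, Finset.univ_inter]
      _ = ∑ u : V, ∑ v : V, if u ∈ e ∧ v ∈ e ∧ v ≠ u then z u * z v else 0 := by
          refine Finset.sum_congr rfl fun u _ => ?_
          by_cases hu : u ∈ e
          · rw [if_pos hu]
            refine Finset.sum_congr rfl fun v _ => ?_
            refine if_congr ?_ rfl rfl
            simp only [Finset.mem_erase]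
            tauto
          · rw [if_neg hu, eq_comm]
            apply Finset.sum_eq_zero
            intro v _
            rw [if_neg (by tauto)]
  simp_rw [key, key2]
  rw [Finset.sum_comm]
  apply Finset.sum_congr rfl
  intro u _
  rw [Finset.sum_comm]

lemma edge_amgm (r : ℕ) (hr : 2 ≤ r) (e : Finset V) (he : e.card = r) (y : V → ℝ)
    (hy : ∀ v, 0 ≤ y v) :
    (r : ℝ) * ((r : ℝ) - 1) * ∏ u ∈ e, y u
      ≤ ∑ u ∈ e, ∑ v ∈ e.erase u, (y u ^ ((r:ℝ)/2)) * (y v ^ ((r:ℝ)/2)) := by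
  set z : V → ℝ := fun u => y u ^ ((r:ℝ)/2) with hzdef
  have hz : ∀ v, 0 ≤ z v := fun v => Real.rpow_nonneg (hy v) _
  set s : Finset (Σ _ : V, V) := e.sigma (fun u => e.erase u) with hs
  have hcard : s.card = r * (r - 1) := by
    rw [hs, Finset.card_sigma]
    have : ∀ u ∈ e, (e.erase u).card = r - 1 := by
      intro u hu
      rw [Finset.card_erase_of_mem hu, he]
    rw [Finset.sum_congr rfl this, Finset.sum_const, he, smul_eq_mul]
  have hN0 : (0:ℝ) < (r * (r - 1) : ℕ) := by
    have : 0 < r * (r - 1) := by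
      apply Nat.mul_pos <;> omega
    exact_mod_cast this
  have hNne : ((r * (r - 1) : ℕ) : ℝ) ≠ 0 := hN0.ne'
  have hNval : ((r * (r - 1) : ℕ) : ℝ) = (r:ℝ) * ((r:ℝ) - 1) := by
    push_cast [Nat.cast_sub (by omega : 1 ≤ r)]
    ring
  -- AM-GM
  have hamgm := Real.geom_mean_le_arith_mean_weighted s
    (fun _ => ((r * (r - 1) : ℕ) : ℝ)⁻¹) (fun p => z p.1 * z p.2)
    (fun _ _ => by positivity)
    (by rw [Finset.sum_const, hcard, nsmul_eq_mul, mul_inv_cancel₀ hNne])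
    (fun p _ => mul_nonneg (hz _) (hz _))
  -- compute the product side
  have hswap : ∏ p ∈ s, z p.2 = ∏ p ∈ s, z p.1 := by
    apply Finset.prod_bij' (fun p _ => (⟨p.2, p.1⟩ : Σ _ : V, V))
      (fun p _ => (⟨p.2, p.1⟩ : Σ _ : V, V))
    · intro p hp
      rw [hs, Finset.mem_sigma, Finset.mem_erase] at hp ⊢
      exact ⟨hp.2.2, hp.2.1.symm, hp.1⟩
    · intro p hp
      rw [hs, Finset.mem_sigma, Finset.mem_erase] at hp ⊢
      exact ⟨hp.2.2, hp.2.1.symm, hp.1⟩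
    · intro p _; rfl
    · intro p _; rfl
    · intro p _; rfl
  have hprod1 : ∏ p ∈ s, z p.1 = ∏ u ∈ e, z u ^ (r - 1) := by
    rw [hs, Finset.prod_sigma]
    apply Finset.prod_congr rfl
    intro u hu
    calc (∏ v ∈ e.erase u, z (⟨u, v⟩ : Σ _ : V, V).1)
        = ∏ _v ∈ e.erase u, z u := rfl
      _ = z u ^ (r - 1) := by
          rw [Finset.prod_const, Finset.card_erase_of_mem hu, he]
  have hzpow : ∀ u, z u ^ (r - 1) * z u ^ (r - 1) = y u ^ (((r * (r - 1) : ℕ)) : ℝ) := by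
    intro u
    rw [← pow_add, hzdef]
    rw [← Real.rpow_natCast (y u ^ ((r:ℝ)/2)) ((r-1) + (r-1)), ← Real.rpow_mul (hy u)]
    congr 1
    have h1 : (((r - 1) + (r - 1) : ℕ) : ℝ) = 2 * ((r:ℝ) - 1) := by
      push_cast [Nat.cast_sub (by omega : 1 ≤ r)]
      ring
    rw [h1, hNval]
    ring
  have hgm : ∏ p ∈ s, (z p.1 * z p.2) ^ (((r * (r - 1) : ℕ) : ℝ))⁻¹ = ∏ u ∈ e, y u := by
    rw [Real.finset_prod_rpow s _ (fun p _ => mul_nonneg (hz _) (hz _)) _,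
      Finset.prod_mul_distrib, hswap, hprod1, ← Finset.prod_mul_distrib,
      Finset.prod_congr rfl (fun u _ => hzpow u),
      ← Real.finset_prod_rpow e _ (fun u _ => Real.rpow_nonneg (hy u) _) _]
    apply Finset.prod_congr rfl
    intro u _
    rw [← Real.rpow_mul (hy u), mul_inv_cancel₀ hNne, Real.rpow_one]
  rw [hgm] at hamgm
  have hsum : ∑ p ∈ s, ((r * (r - 1) : ℕ) : ℝ)⁻¹ * (z p.1 * z p.2)
      = ((r * (r - 1) : ℕ) : ℝ)⁻¹ * ∑ u ∈ e, ∑ v ∈ e.erase u, z u * z v := by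
    rw [← Finset.mul_sum, hs, Finset.sum_sigma]
  rw [hsum] at hamgm
  rw [← hNval]
  calc ((r * (r - 1) : ℕ) : ℝ) * ∏ u ∈ e, y u
      ≤ ((r * (r - 1) : ℕ) : ℝ) * (((r * (r - 1) : ℕ) : ℝ)⁻¹
          * ∑ u ∈ e, ∑ v ∈ e.erase u, z u * z v) :=
        mul_le_mul_of_nonneg_left hamgm hN0.le
    _ = ∑ u ∈ e, ∑ v ∈ e.erase u, z u * z v := by
        rw [← mul_assoc, mul_inv_cancel₀ hNne, one_mul]

end AuxStmt4c
/-- spectral radius vs the 2-shadow. -/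
theorem stmt4 {V : Type*} [Fintype V] [DecidableEq V]
    (E : Finset (Finset V)) (r : ℕ) (hr : 2 ≤ r) (hU : Uniform E r) :
    specRad E r ≤ matSpecRad (shadowMatrix E) / ((r:ℝ) - 1) := by
  have hmsr := matSpecRad_nonneg' (shadowMatrix E)
  have hr1 : (0:ℝ) < (r:ℝ) - 1 := by
    have : (2:ℝ) ≤ (r:ℝ) := by exact_mod_cast hr
    linarith
  unfold specRad
  apply Real.sSup_le _ (div_nonneg hmsr hr1.le)
  rintro w ⟨lam, hlam, rfl⟩
  unfold IsAdjEigenvalue at hlam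
  obtain ⟨x, hx0, heig⟩ := hlam
  rw [le_div_iff₀ hr1]
  set y : V → ℝ := fun v => ‖x v‖ with hy
  have hy0 : ∀ v, 0 ≤ y v := fun v => norm_nonneg _
  set z : V → ℝ := fun v => y v ^ ((r:ℝ)/2) with hz
  have hS : ∀ v, z v ^ 2 = y v ^ r := by
    intro v
    have h0 : z v = y v ^ ((r:ℝ)/2) := rfl
    rw [h0, ← Real.rpow_natCast (y v ^ ((r:ℝ)/2)) 2, ← Real.rpow_mul (hy0 v),
      show ((r:ℝ)/2) * ((2:ℕ):ℝ) = ((r:ℕ):ℝ) by push_cast; ring, Real.rpow_natCast]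
  have hSpos : 0 < ∑ v, y v ^ r := by
    obtain ⟨j, hj⟩ : ∃ j, x j ≠ 0 := Function.ne_iff.mp hx0
    refine Finset.sum_pos' (fun v _ => pow_nonneg (hy0 v) r) ?_
    exact ⟨j, Finset.mem_univ j, pow_pos (norm_pos_iff.mpr hj) r⟩
  have step1 : ∀ v, ‖lam‖ * y v ^ (r-1)
      ≤ ∑ e ∈ E.filter (fun e => v ∈ e), ∏ u ∈ e.erase v, y u := by
    intro v
    calc ‖lam‖ * y v ^ (r-1)
        = ‖lam * x v ^ (r-1)‖ := by rw [norm_mul, norm_pow]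
      _ = ‖∑ e ∈ E.filter (fun e => v ∈ e), ∏ u ∈ e.erase v, x u‖ := by
          rw [heig v]
      _ ≤ ∑ e ∈ E.filter (fun e => v ∈ e), ‖∏ u ∈ e.erase v, x u‖ :=
          norm_sum_le _ _
      _ = ∑ e ∈ E.filter (fun e => v ∈ e), ∏ u ∈ e.erase v, y u := by
          refine Finset.sum_congr rfl fun e _ => ?_
          rw [norm_prod]
  have swap : ∀ F : Finset V → V → ℝ,
      ∑ v : V, ∑ e ∈ E.filter (fun e => v ∈ e), F e v = ∑ e ∈ E, ∑ v ∈ e, F e v := by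
    intro F
    simp_rw [Finset.sum_filter]
    rw [Finset.sum_comm]
    refine Finset.sum_congr rfl fun e _ => ?_
    rw [Finset.sum_ite_mem, Finset.univ_inter]
  have step2 : ‖lam‖ * ∑ v, y v ^ r ≤ (r:ℝ) * ∑ e ∈ E, ∏ u ∈ e, y u := by
    calc ‖lam‖ * ∑ v, y v ^ r
        = ∑ v, ‖lam‖ * y v ^ (r-1) * y v := by
          rw [Finset.mul_sum]
          refine Finset.sum_congr rfl fun v _ => ?_
          rw [mul_assoc, ← pow_succ, Nat.sub_add_cancel (by omega : 1 ≤ r)]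
      _ ≤ ∑ v, (∑ e ∈ E.filter (fun e => v ∈ e), ∏ u ∈ e.erase v, y u) * y v :=
          Finset.sum_le_sum fun v _ => mul_le_mul_of_nonneg_right (step1 v) (hy0 v)
      _ = ∑ v : V, ∑ e ∈ E.filter (fun e => v ∈ e), (∏ u ∈ e.erase v, y u) * y v := by
          refine Finset.sum_congr rfl fun v _ => ?_
          rw [Finset.sum_mul]
      _ = ∑ e ∈ E, ∑ v ∈ e, (∏ u ∈ e.erase v, y u) * y v := swap _
      _ = (r:ℝ) * ∑ e ∈ E, ∏ u ∈ e, y u := by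
          rw [Finset.mul_sum]
          refine Finset.sum_congr rfl fun e he => ?_
          have h1 : ∀ v ∈ e, (∏ u ∈ e.erase v, y u) * y v = ∏ u ∈ e, y u := by
            intro v hv
            rw [mul_comm, Finset.mul_prod_erase e y hv]
          rw [Finset.sum_congr rfl h1, Finset.sum_const, hU e he, nsmul_eq_mul]
  have step3 : (r:ℝ) * ((r:ℝ) - 1) * ∑ e ∈ E, ∏ u ∈ e, y u
      ≤ ∑ u, ∑ v, shadowMatrix E u v * z u * z v := by
    rw [← shadow_quad E z, Finset.mul_sum]
    exact Finset.sum_le_sum fun e he => edge_amgm r hr e (hU e he) y hy0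
  have step4 := quad_le_matSpecRad (shadowMatrix E) (shadow_isHermitian E) z
  have hsum : ∑ v, z v ^ 2 = ∑ v, y v ^ r := Finset.sum_congr rfl fun v _ => hS v
  have final : ‖lam‖ * ((r:ℝ) - 1) * ∑ v, y v ^ r
      ≤ matSpecRad (shadowMatrix E) * ∑ v, y v ^ r := by
    calc ‖lam‖ * ((r:ℝ)-1) * ∑ v, y v ^ r
        = ((r:ℝ)-1) * (‖lam‖ * ∑ v, y v ^ r) := by ring
      _ ≤ ((r:ℝ)-1) * ((r:ℝ) * ∑ e ∈ E, ∏ u ∈ e, y u) :=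
          mul_le_mul_of_nonneg_left step2 hr1.le
      _ = (r:ℝ) * ((r:ℝ)-1) * ∑ e ∈ E, ∏ u ∈ e, y u := by ring
      _ ≤ ∑ u, ∑ v, shadowMatrix E u v * z u * z v := step3
      _ ≤ matSpecRad (shadowMatrix E) * ∑ v, z v ^ 2 := step4
      _ = matSpecRad (shadowMatrix E) * ∑ v, y v ^ r := by rw [hsum]
  exact le_of_mul_le_mul_right final hSpos
end

section
/- Let H be an (m,n)-hm-bipartite linear r-uniform hypergraph with head part V₁ (|V₁| = m) and mass part V₂ (|V₂| = n) that is Berge-C₃-free and exact Berge-K_{s,t}-free, with s ≥ 2, t ≥ 2 and m ≥ s. Then ∑_{v ∈ V₂} C(d(v), s) ≤ (t−1)·C(m, s), where d(v) is the degree of v and C(·,·) is the binomial coefficient. -/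
open Finset

variable {V : Type*} [Fintype V] [DecidableEq V]

/-- Zarankiewicz-type double counting in hm-bipartite hypergraphs. -/
theorem stmt10 {V : Type*} [Fintype V] [DecidableEq V]
    (E : Finset (Finset V)) (r s t m n : ℕ) (V₁ V₂ : Finset V)
    (hU : Uniform E r) (hL : LinearH E) (hbi : HmBipartite E r V₁ V₂)
    (hm : V₁.card = m) (hn : V₂.card = n) (hs : 2 ≤ s) (ht : 2 ≤ t) (hms : s ≤ m)
    (hC3 : ¬ HasBergeC3 E) (hKst : ¬ HasBergeKstIn E s t V₁ V₂) :
    ∑ v ∈ V₂, (hdeg E v).choose s ≤ (t - 1) * m.choose s := by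
  classical
  obtain ⟨hdisj, hcup, hedge⟩ := hbi
  -- uniqueness of the head vertex of each edge
  have hhead : ∀ e ∈ E, ∀ a ∈ e, a ∈ V₁ → ∀ a' ∈ e, a' ∈ V₁ → a = a' := by
    intro e he a ha haV a' ha' ha'V
    have h1 := (hedge e he).1
    exact Finset.card_le_one.mp h1.le a (Finset.mem_inter.mpr ⟨ha, haV⟩)
      a' (Finset.mem_inter.mpr ⟨ha', ha'V⟩)
  -- linearity: two edges sharing two vertices are equal
  have hlin2 : ∀ e₁ ∈ E, ∀ e₂ ∈ E, ∀ x y : V, x ≠ y →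
      x ∈ e₁ → y ∈ e₁ → x ∈ e₂ → y ∈ e₂ → e₁ = e₂ := by
    intro e₁ he₁ e₂ he₂ x y hxy hx1 hy1 hx2 hy2
    by_contra hne
    have hcard := hL e₁ he₁ e₂ he₂ hne
    have : ({x, y} : Finset V) ⊆ e₁ ∩ e₂ := by
      intro z hz
      rcases Finset.mem_insert.mp hz with h | h
      · subst h; exact Finset.mem_inter.mpr ⟨hx1, hx2⟩
      · have := Finset.mem_singleton.mp h; subst this
        exact Finset.mem_inter.mpr ⟨hy1, hy2⟩
    have h2 : ({x, y} : Finset V).card = 2 := Finset.card_pair hxy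
    have := Finset.card_le_card this
    omega
  set H : V → Finset V := fun v => V₁.filter (fun u => ∃ e ∈ E, v ∈ e ∧ u ∈ e) with hHdef
  have hHsub : ∀ v, H v ⊆ V₁ := fun v => Finset.filter_subset _ _
  have hHmem : ∀ v u, u ∈ H v ↔ u ∈ V₁ ∧ ∃ e ∈ E, v ∈ e ∧ u ∈ e := by
    intro v u; simp [hHdef]
  -- a head function
  have hhex : ∀ e ∈ E, ∃ u, u ∈ e ∧ u ∈ V₁ := by
    intro e he
    have h1 := (hedge e he).1
    obtain ⟨u, hu⟩ := Finset.card_eq_one.mp h1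
    refine ⟨u, ?_⟩
    have : u ∈ e ∩ V₁ := hu ▸ Finset.mem_singleton_self u
    exact ⟨(Finset.mem_inter.mp this).1, (Finset.mem_inter.mp this).2⟩
  choose hd hde hdV₁ using hhex
  -- Step 1: for v ∈ V₂, the number of heads equals the degree
  have hHcard : ∀ v ∈ V₂, (H v).card = hdeg E v := by
    intro v hv
    have hvV1 : v ∉ V₁ := fun h => (Finset.disjoint_left.mp hdisj h) hv
    rw [hdeg]
    symm
    apply Finset.card_bij (i := fun e he => hd e (Finset.mem_filter.mp he).1)
    · intro e he
      have heE : e ∈ E := (Finset.mem_filter.mp he).1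
      have hve : v ∈ e := (Finset.mem_filter.mp he).2
      rw [hHmem]
      exact ⟨hdV₁ e heE, e, heE, hve, hde e heE⟩
    · intro e₁ he₁ e₂ he₂ heq
      have he₁E : e₁ ∈ E := (Finset.mem_filter.mp he₁).1
      have he₂E : e₂ ∈ E := (Finset.mem_filter.mp he₂).1
      have huv : hd e₁ he₁E ≠ v := fun h => hvV1 (h ▸ hdV₁ e₁ he₁E)
      exact hlin2 e₁ he₁E e₂ he₂E (hd e₁ he₁E) v huv (hde e₁ he₁E)
        (Finset.mem_filter.mp he₁).2 (heq ▸ hde e₂ he₂E)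
        (Finset.mem_filter.mp he₂).2
    · intro u hu
      rw [hHmem] at hu
      obtain ⟨huV₁, e, heE, hve, hue⟩ := hu
      refine ⟨e, Finset.mem_filter.mpr ⟨heE, hve⟩, ?_⟩
      exact hhead e heE (hd e heE) (hde e heE) (hdV₁ e heE) u hue huV₁
  -- Step 2: rewrite the sum as a double count over s-subsets of V₁
  have hstep2 : ∑ v ∈ V₂, (hdeg E v).choose s =
      ∑ S ∈ V₁.powersetCard s, (V₂.filter (fun v => S ⊆ H v)).card := by
    have h1 : ∀ v ∈ V₂, (hdeg E v).choose s =
        ((V₁.powersetCard s).filter (fun S => S ⊆ H v)).card := by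
      intro v hv
      rw [← hHcard v hv, ← Finset.card_powersetCard]
      congr 1
      ext S
      simp only [Finset.mem_powersetCard, Finset.mem_filter]
      constructor
      · rintro ⟨hS, hc⟩; exact ⟨⟨hS.trans (hHsub v), hc⟩, hS⟩
      · rintro ⟨⟨_, hc⟩, hS⟩; exact ⟨hS, hc⟩
    rw [Finset.sum_congr rfl h1]
    simp only [Finset.card_filter]
    exact Finset.sum_comm
  rw [hstep2]
  -- Step 3: each fiber has at most t-1 elements
  have hfiber : ∀ S ∈ V₁.powersetCard s, (V₂.filter (fun v => S ⊆ H v)).card ≤ t - 1 := by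
    intro S hS
    obtain ⟨hSV₁, hScard⟩ := Finset.mem_powersetCard.mp hS
    by_contra hbig
    push_neg at hbig
    have hbig' : t ≤ (V₂.filter (fun v => S ⊆ H v)).card := by omega
    obtain ⟨T, hTsub, hTcard⟩ := Finset.exists_subset_card_eq hbig'
    set W := V₂.filter (fun v => S ⊆ H v) with hWdef
    have hTW : ∀ b ∈ T, b ∈ V₂ ∧ S ⊆ H b := by
      intro b hb
      exact Finset.mem_filter.mp (hTsub hb)
    -- key lemma: no edge contains a ∈ S and two distinct elements of W
    have hkey : ∀ a ∈ S, ∀ b ∈ T, ∀ b' ∈ T, b ≠ b' →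
        ∀ e ∈ E, a ∈ e → b ∈ e → b' ∈ e → False := by
      intro a ha b hb b' hb' hbb' e he hae hbe hb'e
      -- get a second vertex a' ∈ S
      have hpos : 0 < (S.erase a).card := by
        have := Finset.card_erase_of_mem ha
        omega
      obtain ⟨a', ha'⟩ := Finset.card_pos.mp hpos
      have ha'ne : a' ≠ a := Finset.ne_of_mem_erase ha'
      have ha'S : a' ∈ S := Finset.mem_of_mem_erase ha'
      obtain ⟨e', he'E, hbe', ha'e'⟩ := ((hHmem b a').mp ((hTW b hb).2 ha'S)).2
      obtain ⟨e'', he''E, hb'e'', ha'e''⟩ := ((hHmem b' a').mp ((hTW b' hb').2 ha'S)).2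
      have hane' : e ≠ e' := by
        intro h
        exact ha'ne (hhead e he a' (h ▸ ha'e') (hSV₁ ha'S) a hae (hSV₁ ha))
      have hane'' : e ≠ e'' := by
        intro h
        exact ha'ne (hhead e he a' (h ▸ ha'e'') (hSV₁ ha'S) a hae (hSV₁ ha))
      by_cases hee : e' = e''
      · subst hee
        exact hane' (hlin2 e he e' he'E b b' hbb' hbe hb'e hbe' hb'e'')
      · -- Berge C3
        apply hC3
        have hbV₂ : b ∈ V₂ := (hTW b hb).1
        have hb'V₂ : b' ∈ V₂ := (hTW b' hb').1
        have ha'V₁ : a' ∈ V₁ := hSV₁ ha'S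
        have hba' : b ≠ a' := fun h => (Finset.disjoint_left.mp hdisj ha'V₁) (h ▸ hbV₂)
        have hb'a' : b' ≠ a' := fun h => (Finset.disjoint_left.mp hdisj ha'V₁) (h ▸ hb'V₂)
        exact ⟨e, he, e'', he''E, e', he'E, b, b', a',
          hane'', fun h => hee h.symm, hane', hbb', hb'a', hba',
          hbe, hb'e, hb'e'', ha'e'', ha'e', hbe'⟩
    -- build the Berge K_{s,t}
    apply hKst
    refine ⟨S, T, fun a b => if h : ∃ e ∈ E, b ∈ e ∧ a ∈ e then h.choose else ∅,
      hSV₁, hTsub.trans (Finset.filter_subset _ _), hScard, hTcard,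
      hdisj.mono hSV₁ (hTsub.trans (Finset.filter_subset _ _)), ?_, ?_⟩
    · intro a ha b hb
      have hex : ∃ e ∈ E, b ∈ e ∧ a ∈ e := ((hHmem b a).mp ((hTW b hb).2 ha)).2
      simp only [dif_pos hex]
      obtain ⟨heE, hbe, hae⟩ := hex.choose_spec
      exact ⟨heE, hae, hbe⟩
    · intro a ha b hb a' ha' b' hb' heq
      have hex : ∃ e ∈ E, b ∈ e ∧ a ∈ e := ((hHmem b a).mp ((hTW b hb).2 ha)).2
      have hex' : ∃ e ∈ E, b' ∈ e ∧ a' ∈ e := ((hHmem b' a').mp ((hTW b' hb').2 ha')).2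
      simp only [dif_pos hex, dif_pos hex'] at heq
      obtain ⟨heE, hbe, hae⟩ := hex.choose_spec
      obtain ⟨he'E, hb'e, ha'e⟩ := hex'.choose_spec
      rw [← heq] at hb'e ha'e
      have haa : a = a' := hhead _ heE a hae (hSV₁ ha) a' ha'e (hSV₁ ha')
      refine ⟨haa, ?_⟩
      by_contra hbb'
      exact hkey a ha b hb b' hb' hbb' _ heE hae hbe hb'e
  calc ∑ S ∈ V₁.powersetCard s, (V₂.filter (fun v => S ⊆ H v)).card
      ≤ ∑ _S ∈ V₁.powersetCard s, (t - 1) := Finset.sum_le_sum hfiber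
    _ = (t - 1) * m.choose s := by
        rw [Finset.sum_const, Finset.card_powersetCard, hm, smul_eq_mul, Nat.mul_comm]
end

section
/- Let H be an (m,n)-hm-bipartite linear r-uniform hypergraph with head part of size m and mass part of size n that is Berge-C₃-free and exact Berge-K_{s,t}-free, where s, t ≥ 2. Then e(H) ≤ ((t−1)^(1/s)/(r−1))·m·n^(1−1/s) + ((s−1)/(r−1))·n. -/
open Finset

variable {V : Type*} [Fintype V] [DecidableEq V]

open Classical in
/-- pick an edge through `a` and `b`, if one exists. -/
noncomputable def pickEdge {V : Type*} [DecidableEq V] (E : Finset (Finset V)) (a b : V) :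
    Finset V :=
  if h : ∃ e ∈ E, a ∈ e ∧ b ∈ e then h.choose else ∅

theorem pickEdge_spec {V : Type*} [DecidableEq V] {E : Finset (Finset V)} {a b : V}
    (h : ∃ e ∈ E, a ∈ e ∧ b ∈ e) :
    pickEdge E a b ∈ E ∧ a ∈ pickEdge E a b ∧ b ∈ pickEdge E a b := by
  rw [pickEdge, dif_pos h]
  exact ⟨h.choose_spec.1, h.choose_spec.2.1, h.choose_spec.2.2⟩

open Classical in
/-- the set of heads adjacent to a mass vertex `b`. -/
noncomputable def headNbrs {V : Type*} [DecidableEq V] (E : Finset (Finset V))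
    (V₁ : Finset V) (b : V) : Finset V :=
  V₁.filter (fun a => ∃ e ∈ E, a ∈ e ∧ b ∈ e)

theorem mem_headNbrs {V : Type*} [DecidableEq V] {E : Finset (Finset V)}
    {V₁ : Finset V} {b a : V} :
    a ∈ headNbrs E V₁ b ↔ a ∈ V₁ ∧ ∃ e ∈ E, a ∈ e ∧ b ∈ e := by
  rw [headNbrs, Finset.mem_filter]

theorem aux_sumdeg {V : Type*} [Fintype V] [DecidableEq V]
    (E : Finset (Finset V)) (r : ℕ) (V₁ V₂ : Finset V)
    (hbi : HmBipartite E r V₁ V₂) :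
    ∑ b ∈ V₂, hdeg E b = E.card * (r - 1) := by
  classical
  calc ∑ b ∈ V₂, hdeg E b = ∑ b ∈ V₂, ∑ e ∈ E, if b ∈ e then 1 else 0 := by
        simp only [hdeg, Finset.card_filter]
    _ = ∑ e ∈ E, ∑ b ∈ V₂, if b ∈ e then 1 else 0 := Finset.sum_comm
    _ = ∑ e ∈ E, (e ∩ V₂).card := by
        refine Finset.sum_congr rfl fun e he => ?_
        rw [← Finset.card_filter]
        congr 1
        ext x
        simp [Finset.mem_inter, and_comm]
    _ = ∑ e ∈ E, (r - 1) := Finset.sum_congr rfl fun e he => (hbi.2.2 e he).2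
    _ = E.card * (r - 1) := by rw [Finset.sum_const, smul_eq_mul]

theorem aux_count {V : Type*} [Fintype V] [DecidableEq V]
    (E : Finset (Finset V)) (r s t : ℕ) (V₁ V₂ : Finset V)
    (hL : LinearH E) (hbi : HmBipartite E r V₁ V₂) (hs : 2 ≤ s) (ht : 2 ≤ t)
    (hC3 : ¬ HasBergeC3 E) (hKst : ¬ HasBergeKstIn E s t V₁ V₂) :
    ∑ b ∈ V₂, Nat.choose (hdeg E b) s ≤ (t - 1) * Nat.choose V₁.card s := by
  classical
  obtain ⟨hdisj, -, hE⟩ := hbi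
  have hhead : ∀ e ∈ E, ∃ a, e ∩ V₁ = {a} := fun e he =>
    Finset.card_eq_one.mp (hE e he).1
  -- heads are unique in each edge
  have hone : ∀ e ∈ E, ∀ x ∈ e, x ∈ V₁ → ∀ y ∈ e, y ∈ V₁ → x = y := by
    intro e he x hx hx1 y hy hy1
    exact Finset.card_le_one.mp (le_of_eq (hE e he).1) x
      (Finset.mem_inter.mpr ⟨hx, hx1⟩) y (Finset.mem_inter.mpr ⟨hy, hy1⟩)
  have hdVB : ∀ x ∈ V₁, ∀ y ∈ V₂, x ≠ y := by
    intro x hx y hy hxy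
    exact Finset.disjoint_left.mp hdisj hx (hxy ▸ hy)
  have hcm : ∀ e (he : e ∈ E), (hhead e he).choose ∈ e ∧ (hhead e he).choose ∈ V₁ := by
    intro e he
    have h1 : (hhead e he).choose ∈ ({(hhead e he).choose} : Finset V) :=
      Finset.mem_singleton_self _
    rw [← (hhead e he).choose_spec] at h1
    exact Finset.mem_inter.mp h1
  -- Step B1 : the degree of b equals the number of head-neighbours of b
  have hN₁card : ∀ b ∈ V₂, hdeg E b = (headNbrs E V₁ b).card := by
    intro b hb
    apply Finset.card_bij (fun e he => (hhead e (Finset.mem_filter.mp he).1).choose)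
    · intro e he
      obtain ⟨heE, hbe⟩ := Finset.mem_filter.mp he
      rw [mem_headNbrs]
      exact ⟨(hcm e heE).2, e, heE, (hcm e heE).1, hbe⟩
    · intro e₁ he₁ e₂ he₂ hch
      obtain ⟨he₁E, hbe₁⟩ := Finset.mem_filter.mp he₁
      obtain ⟨he₂E, hbe₂⟩ := Finset.mem_filter.mp he₂
      by_contra hne
      set a := (hhead e₁ he₁E).choose with ha
      have ha₁ := hcm e₁ he₁E
      have ha₂ := hcm e₂ he₂E
      rw [← hch] at ha₂
      have hab : a ≠ b := hdVB a ha₁.2 b hb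
      have hsub : ({a, b} : Finset V) ⊆ e₁ ∩ e₂ := by
        intro x hx
        rcases Finset.mem_insert.mp hx with rfl | hx
        · exact Finset.mem_inter.mpr ⟨ha₁.1, ha₂.1⟩
        · rw [Finset.mem_singleton.mp hx]
          exact Finset.mem_inter.mpr ⟨hbe₁, hbe₂⟩
      have h2 : 2 ≤ (e₁ ∩ e₂).card := by
        calc 2 = ({a, b} : Finset V).card := (Finset.card_pair hab).symm
          _ ≤ (e₁ ∩ e₂).card := Finset.card_le_card hsub
      have := hL e₁ he₁E e₂ he₂E hne
      omega
    · intro a haN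
      obtain ⟨haV₁, e, heE, hae, hbe⟩ := mem_headNbrs.mp haN
      refine ⟨e, Finset.mem_filter.mpr ⟨heE, hbe⟩, ?_⟩
      exact (hone e heE a hae haV₁ _ (hcm e heE).1 (hcm e heE).2).symm
  -- Step B2 : every s-set of heads has at most t-1 common mass-neighbours
  have hB2 : ∀ S ⊆ V₁, S.card = s →
      (V₂.filter (fun b => S ⊆ headNbrs E V₁ b)).card ≤ t - 1 := by
    intro S hSV hScard
    by_contra hlt
    push_neg at hlt
    obtain ⟨T, hTsub, hTcard⟩ :=
      Finset.exists_subset_card_eq (show t ≤ (V₂.filter (fun b => S ⊆ headNbrs E V₁ b)).card by omega)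
    have hTV₂ : T ⊆ V₂ := hTsub.trans (Finset.filter_subset _ _)
    have hTN : ∀ b ∈ T, S ⊆ headNbrs E V₁ b := fun b hb =>
      (Finset.mem_filter.mp (hTsub hb)).2
    have hex : ∀ a ∈ S, ∀ b ∈ T, ∃ e ∈ E, a ∈ e ∧ b ∈ e := fun a ha b hb =>
      (mem_headNbrs.mp (hTN b hb ha)).2
    have hf : ∀ a ∈ S, ∀ b ∈ T, pickEdge E a b ∈ E ∧ a ∈ pickEdge E a b ∧
        b ∈ pickEdge E a b := fun a ha b hb => pickEdge_spec (hex a ha b hb)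
    apply hKst
    refine ⟨S, T, pickEdge E, hSV, hTV₂, hScard, hTcard,
      hdisj.mono hSV hTV₂, hf, ?_⟩
    intro a ha b hb a' ha' b' hb' heq
    obtain ⟨heE, hae, hbe⟩ := hf a ha b hb
    obtain ⟨heE', hae', hbe'⟩ := hf a' ha' b' hb'
    rw [← heq] at hae' hbe'
    have haa : a = a' := hone _ heE a hae (hSV ha) a' hae' (hSV ha')
    refine ⟨haa, ?_⟩
    by_contra hbb
    -- b ≠ b' both in the edge e := pickEdge E a b ; build a Berge triangle
    obtain ⟨a'', ha'', hane⟩ := Finset.exists_mem_ne (s := S) (by omega) a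
    obtain ⟨he'E, ha''e', hbe''⟩ := hf a'' ha'' b hb
    obtain ⟨he''E, ha''e'', hb'e''⟩ := hf a'' ha'' b' hb'
    set e := pickEdge E a b
    set e' := pickEdge E a'' b
    set e'' := pickEdge E a'' b'
    have hnee' : e ≠ e' := by
      intro h
      exact hane (hone e heE a'' (h ▸ ha''e') (hSV ha'') a hae (hSV ha))
    have hnee'' : e ≠ e'' := by
      intro h
      exact hane (hone e heE a'' (h ▸ ha''e'') (hSV ha'') a hae (hSV ha))
    have hne'e'' : e' ≠ e'' := by
      intro h
      have hsub : ({b, b'} : Finset V) ⊆ e ∩ e' := by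
        intro x hx
        rcases Finset.mem_insert.mp hx with rfl | hx
        · exact Finset.mem_inter.mpr ⟨hbe, hbe''⟩
        · rw [Finset.mem_singleton.mp hx]
          exact Finset.mem_inter.mpr ⟨hbe', h ▸ hb'e''⟩
      have h2 : 2 ≤ (e ∩ e').card := by
        calc 2 = ({b, b'} : Finset V).card := (Finset.card_pair hbb).symm
          _ ≤ (e ∩ e').card := Finset.card_le_card hsub
      have := hL e heE e' he'E hnee'
      omega
    have hbV₂ : b ∈ V₂ := hTV₂ hb
    have hb'V₂ : b' ∈ V₂ := hTV₂ hb'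
    have ha''V₁ : a'' ∈ V₁ := hSV ha''
    exact hC3 ⟨e, heE, e', he'E, e'', he''E, b', b, a'', hnee', hne'e'', hnee'',
      fun h => hbb h.symm, (hdVB a'' ha''V₁ b hbV₂).symm,
      (hdVB a'' ha''V₁ b' hb'V₂).symm, hbe', hbe, hbe'', ha''e', ha''e'', hb'e''⟩
  -- Step B3 : double counting
  calc ∑ b ∈ V₂, Nat.choose (hdeg E b) s
      = ∑ b ∈ V₂, ((V₁.powersetCard s).filter (fun S => S ⊆ headNbrs E V₁ b)).card := by
        refine Finset.sum_congr rfl fun b hb => ?_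
        rw [hN₁card b hb, ← Finset.card_powersetCard s (headNbrs E V₁ b)]
        congr 1
        ext S
        simp only [Finset.mem_powersetCard, Finset.mem_filter]
        constructor
        · rintro ⟨hsub, hcard⟩
          exact ⟨⟨hsub.trans (Finset.filter_subset _ _), hcard⟩, hsub⟩
        · rintro ⟨⟨-, hcard⟩, hsub⟩
          exact ⟨hsub, hcard⟩
    _ = ∑ S ∈ V₁.powersetCard s, (V₂.filter (fun b => S ⊆ headNbrs E V₁ b)).card := by
        simp only [Finset.card_filter]
        exact Finset.sum_comm
    _ ≤ ∑ S ∈ V₁.powersetCard s, (t - 1) := by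
        refine Finset.sum_le_sum fun S hS => ?_
        obtain ⟨hsub, hcard⟩ := Finset.mem_powersetCard.mp hS
        exact hB2 S hsub hcard
    _ = (t - 1) * Nat.choose V₁.card s := by
        rw [Finset.sum_const, smul_eq_mul, Finset.card_powersetCard, mul_comm]


/-- edge bound for hm-bipartite exact Berge-K_{s,t}-free, Berge-C₃-free
linear hypergraphs. -/
theorem stmt11 {V : Type*} [Fintype V] [DecidableEq V]
    (E : Finset (Finset V)) (r s t m n : ℕ) (V₁ V₂ : Finset V)
    (hr : 2 ≤ r) (hU : Uniform E r) (hL : LinearH E) (hbi : HmBipartite E r V₁ V₂)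
    (hm : V₁.card = m) (hn : V₂.card = n) (hs : 2 ≤ s) (ht : 2 ≤ t)
    (hC3 : ¬ HasBergeC3 E) (hKst : ¬ HasBergeKstIn E s t V₁ V₂) :
    (E.card : ℝ) ≤ ((t:ℝ) - 1) ^ ((1:ℝ)/(s:ℝ)) / ((r:ℝ) - 1) * (m:ℝ) *
        (n:ℝ) ^ (1 - (1:ℝ)/(s:ℝ)) + ((s:ℝ) - 1) / ((r:ℝ) - 1) * (n:ℝ) := by
  classical
  have hr1 : (0:ℝ) < (r:ℝ) - 1 := by
    have : (2:ℝ) ≤ (r:ℝ) := by exact_mod_cast hr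
    linarith
  have ht1 : (0:ℝ) ≤ (t:ℝ) - 1 := by
    have : (2:ℝ) ≤ (t:ℝ) := by exact_mod_cast ht
    linarith
  have hs1 : (0:ℝ) ≤ (s:ℝ) - 1 := by
    have : (2:ℝ) ≤ (s:ℝ) := by exact_mod_cast hs
    linarith
  have hsR : (0:ℝ) < (s:ℝ) := by positivity
  -- trivial case n = 0
  rcases Nat.eq_zero_or_pos n with hn0 | hnpos
  · have hV₂ : V₂ = ∅ := Finset.card_eq_zero.mp (by omega)
    have hE0 : E = ∅ := by
      rw [Finset.eq_empty_iff_forall_notMem]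
      intro e he
      have h2 := (hbi.2.2 e he).2
      rw [hV₂, Finset.inter_empty, Finset.card_empty] at h2
      omega
    rw [hE0]
    simp only [Finset.card_empty, Nat.cast_zero]
    have h1 : (0:ℝ) ≤ ((t:ℝ) - 1) ^ ((1:ℝ)/(s:ℝ)) / ((r:ℝ) - 1) * (m:ℝ) *
        (n:ℝ) ^ (1 - (1:ℝ)/(s:ℝ)) := by
      apply mul_nonneg (mul_nonneg (div_nonneg (Real.rpow_nonneg ht1 _) hr1.le)
        (Nat.cast_nonneg m)) (Real.rpow_nonneg (Nat.cast_nonneg n) _)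
    have h2 : (0:ℝ) ≤ ((s:ℝ) - 1) / ((r:ℝ) - 1) * (n:ℝ) :=
      mul_nonneg (div_nonneg hs1 hr1.le) (Nat.cast_nonneg n)
    linarith
  -- main case
  have hnR : (0:ℝ) < (n:ℝ) := by exact_mod_cast hnpos
  have hA : ∑ b ∈ V₂, hdeg E b = E.card * (r - 1) := aux_sumdeg E r V₁ V₂ hbi
  have hB : ∑ b ∈ V₂, Nat.choose (hdeg E b) s ≤ (t - 1) * Nat.choose m s := by
    have := aux_count E r s t V₁ V₂ hL hbi hs ht hC3 hKst
    rwa [hm] at this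
  set g : V → ℝ := fun b => max ((hdeg E b : ℝ) - ((s:ℝ) - 1)) 0 with hgdef
  have hg0 : ∀ b ∈ V₂, 0 ≤ g b := fun b _ => le_max_right _ _
  have h1 : ∀ b ∈ V₂, g b ^ s ≤ (Nat.factorial s : ℝ) * (Nat.choose (hdeg E b) s) := by
    intro b _
    rcases le_or_gt (hdeg E b) (s - 1) with hle | hlt
    · have hgz : g b = 0 := by
        apply max_eq_right
        have : (hdeg E b : ℝ) ≤ ((s - 1 : ℕ) : ℝ) := by exact_mod_cast hle
        rw [Nat.cast_sub (by omega : 1 ≤ s)] at this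
        push_cast at this ⊢
        linarith
      rw [hgz, zero_pow (by omega : s ≠ 0)]
      positivity
    · have hge : s ≤ hdeg E b := by omega
      have hnat : (hdeg E b + 1 - s) ^ s ≤ Nat.factorial s * Nat.choose (hdeg E b) s := by
        rw [← Nat.descFactorial_eq_factorial_mul_choose]
        exact Nat.pow_sub_le_descFactorial _ _
      have hgx : g b = ((hdeg E b + 1 - s : ℕ) : ℝ) := by
        simp only [hgdef]
        rw [max_eq_left, Nat.cast_sub (by omega : s ≤ hdeg E b + 1)]
        · push_cast; ring
        · have : ((s:ℝ)) ≤ (hdeg E b : ℝ) := by exact_mod_cast hge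
          linarith
      rw [hgx]
      exact_mod_cast hnat
  set P : ℝ := ∑ b ∈ V₂, g b with hPdef
  have hP0 : 0 ≤ P := Finset.sum_nonneg hg0
  have hsumgs : ∑ b ∈ V₂, g b ^ s ≤ ((t:ℝ) - 1) * (m:ℝ) ^ s := by
    calc ∑ b ∈ V₂, g b ^ s
        ≤ ∑ b ∈ V₂, (Nat.factorial s : ℝ) * (Nat.choose (hdeg E b) s) :=
          Finset.sum_le_sum h1
      _ = (Nat.factorial s : ℝ) * ∑ b ∈ V₂, (Nat.choose (hdeg E b) s : ℝ) := by
          rw [Finset.mul_sum]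
      _ ≤ (Nat.factorial s : ℝ) * (((t:ℝ) - 1) * (Nat.choose m s : ℝ)) := by
          apply mul_le_mul_of_nonneg_left _ (Nat.cast_nonneg _)
          have hcast : (((t - 1) * Nat.choose m s : ℕ) : ℝ)
              = ((t:ℝ) - 1) * (Nat.choose m s : ℝ) := by
            push_cast [Nat.cast_sub (by omega : 1 ≤ t)]
            ring
          rw [← hcast]
          exact_mod_cast hB
      _ = ((t:ℝ) - 1) * ((Nat.factorial s : ℝ) * (Nat.choose m s : ℝ)) := by ring
      _ ≤ ((t:ℝ) - 1) * (m:ℝ) ^ s := by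
          apply mul_le_mul_of_nonneg_left _ ht1
          have : Nat.factorial s * Nat.choose m s ≤ m ^ s := by
            rw [← Nat.descFactorial_eq_factorial_mul_choose]
            exact Nat.descFactorial_le_pow _ _
          exact_mod_cast this
  have hps : P ^ s ≤ ((n:ℝ) ^ (s - 1) * (((t:ℝ) - 1) * (m:ℝ) ^ s)) := by
    have hpm := pow_sum_div_card_le_sum_pow hg0 (s - 1)
    rw [hn] at hpm
    have hs' : s - 1 + 1 = s := by omega
    rw [hs', div_le_iff₀ (by positivity : (0:ℝ) < (n:ℝ) ^ (s - 1))] at hpm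
    calc P ^ s ≤ (∑ b ∈ V₂, g b ^ s) * (n:ℝ) ^ (s - 1) := hpm
      _ ≤ (((t:ℝ) - 1) * (m:ℝ) ^ s) * (n:ℝ) ^ (s - 1) := by
          apply mul_le_mul_of_nonneg_right hsumgs (by positivity)
      _ = (n:ℝ) ^ (s - 1) * (((t:ℝ) - 1) * (m:ℝ) ^ s) := by ring
  have hPle : P ≤ ((t:ℝ) - 1) ^ ((1:ℝ)/(s:ℝ)) * (m:ℝ) * (n:ℝ) ^ (1 - (1:ℝ)/(s:ℝ)) := by
    have hmono := Real.rpow_le_rpow (by positivity : (0:ℝ) ≤ P ^ s) hps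
      (by positivity : (0:ℝ) ≤ (1:ℝ)/(s:ℝ))
    have hleft : (P ^ s : ℝ) ^ ((1:ℝ)/(s:ℝ)) = P := by
      rw [← Real.rpow_natCast P s, ← Real.rpow_mul hP0]
      rw [mul_one_div, div_self (by positivity : ((s:ℕ):ℝ) ≠ 0), Real.rpow_one]
    have hright : ((n:ℝ) ^ (s - 1) * (((t:ℝ) - 1) * (m:ℝ) ^ s)) ^ ((1:ℝ)/(s:ℝ))
        = ((t:ℝ) - 1) ^ ((1:ℝ)/(s:ℝ)) * (m:ℝ) * (n:ℝ) ^ (1 - (1:ℝ)/(s:ℝ)) := by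
      rw [Real.mul_rpow (by positivity) (by positivity : (0:ℝ) ≤ ((t:ℝ)-1) * (m:ℝ)^s),
          Real.mul_rpow ht1 (by positivity)]
      rw [← Real.rpow_natCast (n:ℝ) (s - 1), ← Real.rpow_natCast (m:ℝ) s,
          ← Real.rpow_mul (Nat.cast_nonneg n), ← Real.rpow_mul (Nat.cast_nonneg m)]
      have e1 : ((s - 1 : ℕ) : ℝ) * ((1:ℝ)/(s:ℝ)) = 1 - (1:ℝ)/(s:ℝ)  := by
        rw [Nat.cast_sub (by omega : 1 ≤ s), Nat.cast_one]
        field_simp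
      have e2 : ((s:ℕ):ℝ) * ((1:ℝ)/(s:ℝ)) = 1 := by
        field_simp
      rw [e1, e2, Real.rpow_one]
      ring
    rw [hleft, hright] at hmono
    exact hmono
  have hdle : ∀ b ∈ V₂, (hdeg E b : ℝ) ≤ g b + ((s:ℝ) - 1) := by
    intro b _
    have := le_max_left ((hdeg E b : ℝ) - ((s:ℝ) - 1)) 0
    simp only [hgdef]
    linarith
  have hDcast : (E.card : ℝ) * ((r:ℝ) - 1) = ∑ b ∈ V₂, (hdeg E b : ℝ) := by
    have : (((E.card * (r - 1) : ℕ)) : ℝ) = (E.card : ℝ) * ((r:ℝ) - 1) := by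
      push_cast [Nat.cast_sub (by omega : 1 ≤ r)]
      ring
    rw [← this, ← hA]
    push_cast
    rfl
  have hDle : (E.card : ℝ) * ((r:ℝ) - 1)
      ≤ ((t:ℝ) - 1) ^ ((1:ℝ)/(s:ℝ)) * (m:ℝ) * (n:ℝ) ^ (1 - (1:ℝ)/(s:ℝ))
        + ((s:ℝ) - 1) * (n:ℝ) := by
    calc (E.card : ℝ) * ((r:ℝ) - 1) = ∑ b ∈ V₂, (hdeg E b : ℝ) := hDcast
      _ ≤ ∑ b ∈ V₂, (g b + ((s:ℝ) - 1)) := Finset.sum_le_sum hdle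
      _ = P + ((s:ℝ) - 1) * (n:ℝ) := by
          rw [Finset.sum_add_distrib, Finset.sum_const, hn, nsmul_eq_mul]
          ring
      _ ≤ _ := by linarith
  calc (E.card : ℝ) = (E.card : ℝ) * ((r:ℝ) - 1) / ((r:ℝ) - 1) := by
        field_simp
    _ ≤ (((t:ℝ) - 1) ^ ((1:ℝ)/(s:ℝ)) * (m:ℝ) * (n:ℝ) ^ (1 - (1:ℝ)/(s:ℝ))
        + ((s:ℝ) - 1) * (n:ℝ)) / ((r:ℝ) - 1) := by gcongr
    _ = _ := by ring
end

section
/- Let H be an n-vertex linear r-uniform hypergraph that is Berge-K_{2,t}-free and Berge-C₃-free, with t ≥ 2. Then for every vertex u, ∑_{v ∈ N(u)} d(v) ≤ (r−t)·d(u) + (t−1)(n−1)/(r−1). -/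
open Finset

variable {V : Type*} [Fintype V] [DecidableEq V]

section Aux13
variable {V : Type*} [Fintype V] [DecidableEq V]

lemma mem_nbrs' {E : Finset (Finset V)} {u x : V} :
    x ∈ nbrs E u ↔ x ≠ u ∧ ∃ e ∈ E, u ∈ e ∧ x ∈ e := by
  classical
  simp [nbrs]

lemma uniq_edge' {E : Finset (Finset V)} (hL : LinearH E) {u v : V} (huv : u ≠ v)
    {e₁ e₂ : Finset V} (h₁ : e₁ ∈ E) (h₂ : e₂ ∈ E)
    (hu1 : u ∈ e₁) (hv1 : v ∈ e₁) (hu2 : u ∈ e₂) (hv2 : v ∈ e₂) : e₁ = e₂ := by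
  by_contra hne
  have h := hL e₁ h₁ e₂ h₂ hne
  have hsub : ({u, v} : Finset V) ⊆ e₁ ∩ e₂ := by
    intro x hx
    simp only [mem_insert, mem_singleton] at hx
    rcases hx with rfl | rfl <;> simp [Finset.mem_inter, *]
  have := Finset.card_le_card hsub
  rw [Finset.card_pair huv] at this
  omega

lemma atMostOne' {E : Finset (Finset V)} (hL : LinearH E) (hC3 : ¬ HasBergeC3 E)
    {u : V} {e : Finset V} (he : e ∈ E) (hu : u ∉ e) :
    (e ∩ nbrs E u).card ≤ 1 := by
  by_contra h
  push_neg at h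
  obtain ⟨v₁, hv₁, v₂, hv₂, hne⟩ := Finset.one_lt_card.mp h
  rw [Finset.mem_inter, mem_nbrs'] at hv₁ hv₂
  obtain ⟨hv₁e, hv₁u, f₁, hf₁E, huf₁, hv₁f₁⟩ := hv₁
  obtain ⟨hv₂e, hv₂u, f₂, hf₂E, huf₂, hv₂f₂⟩ := hv₂
  by_cases hf : f₁ = f₂
  · subst hf
    have hef : e ≠ f₁ := fun h => hu (h ▸ huf₁)
    exact hef (uniq_edge' hL hne he hf₁E hv₁e hv₂e hv₁f₁ hv₂f₂)
  · exact hC3 ⟨f₁, hf₁E, e, he, f₂, hf₂E, u, v₁, v₂,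
      (fun h => hu (h ▸ huf₁)), (fun h => hu (h.symm ▸ huf₂)), hf,
      (Ne.symm hv₁u), hne, (Ne.symm hv₂u), huf₁, hv₁f₁, hv₁e, hv₂e, hv₂f₂, huf₂⟩

lemma key_bound' {E : Finset (Finset V)} {t : ℕ} (ht : 2 ≤ t)
    (hL : LinearH E) (hK : ¬ HasBergeKst E 2 t) (hC3 : ¬ HasBergeC3 E)
    {u w : V} (hwu : w ≠ u) (hwn : w ∉ nbrs E u) :
    (E.filter (fun e => u ∉ e ∧ w ∈ e ∧ (e ∩ nbrs E u).Nonempty)).card ≤ t - 1 := by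
  classical
  by_contra hcon
  push_neg at hcon
  have hts : t ≤ (E.filter (fun e => u ∉ e ∧ w ∈ e ∧ (e ∩ nbrs E u).Nonempty)).card := by omega
  obtain ⟨G, hGsub, hGcard⟩ := Finset.exists_subset_card_eq hts
  have hGprop : ∀ e ∈ G, e ∈ E ∧ u ∉ e ∧ w ∈ e ∧ (e ∩ nbrs E u).Nonempty := by
    intro e he
    have := hGsub he
    rw [Finset.mem_filter] at this
    tauto
  set ν : Finset V → V := fun e => if h : (e ∩ nbrs E u).Nonempty then h.choose else u with hν
  have hνmem : ∀ e ∈ G, ν e ∈ e ∧ ν e ∈ nbrs E u := by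
    intro e he
    have h := (hGprop e he).2.2.2
    have : ν e = h.choose := by simp [hν, dif_pos h]
    rw [this]
    have := h.choose_spec
    rw [Finset.mem_inter] at this
    exact this
  have hνinj : ∀ e₁ ∈ G, ∀ e₂ ∈ G, ν e₁ = ν e₂ → e₁ = e₂ := by
    intro e₁ h₁ e₂ h₂ heq
    by_contra hne
    obtain ⟨hE₁, hu₁, hw₁, -⟩ := hGprop e₁ h₁
    obtain ⟨hE₂, hu₂, hw₂, -⟩ := hGprop e₂ h₂
    obtain ⟨hνe₁, hνn₁⟩ := hνmem e₁ h₁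
    have hνw : ν e₁ ≠ w := fun h => hwn (h ▸ hνn₁)
    exact hne (uniq_edge' hL hνw hE₁ hE₂ hνe₁ hw₁ (heq ▸ (hνmem e₂ h₂).1) hw₂)
  set T : Finset V := G.image ν with hT
  have hTcard : T.card = t := by
    rw [hT, Finset.card_image_of_injOn (fun a ha b hb h => hνinj a ha b hb h), hGcard]
  have hTsub : ∀ b ∈ T, b ∈ nbrs E u := by
    intro b hb
    rw [hT, Finset.mem_image] at hb
    obtain ⟨e, he, rfl⟩ := hb
    exact (hνmem e he).2
  set μ : V → Finset V := fun b => if hb : b ∈ T then (Finset.mem_image.mp (hT ▸ hb)).choose else ∅ with hμ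
  have hμspec : ∀ b ∈ T, μ b ∈ G ∧ ν (μ b) = b := by
    intro b hb
    have h : ∃ a ∈ G, ν a = b := Finset.mem_image.mp (hT ▸ hb)
    have : μ b = h.choose := by simp [hμ, dif_pos hb]
    rw [this]
    exact h.choose_spec
  have hμprop : ∀ b ∈ T, μ b ∈ E ∧ u ∉ μ b ∧ w ∈ μ b ∧ b ∈ μ b := by
    intro b hb
    obtain ⟨hG, hn⟩ := hμspec b hb
    obtain ⟨h1, h2, h3, -⟩ := hGprop _ hG
    refine ⟨h1, h2, h3, ?_⟩
    have h4 := (hνmem _ hG).1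
    rwa [hn] at h4
  have hμinj : ∀ b ∈ T, ∀ b' ∈ T, μ b = μ b' → b = b' := by
    intro b hb b' hb' h
    have h1 := (hμspec b hb).2
    have h2 := (hμspec b' hb').2
    rw [← h1, ← h2, h]
  set g : V → Finset V := fun b => if hb : b ∈ nbrs E u then (mem_nbrs'.mp hb).2.choose else ∅ with hg
  have hgspec : ∀ b ∈ nbrs E u, g b ∈ E ∧ u ∈ g b ∧ b ∈ g b := by
    intro b hb
    have h : ∃ e ∈ E, u ∈ e ∧ b ∈ e := (mem_nbrs'.mp hb).2
    have : g b = h.choose := by simp [hg, dif_pos hb]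
    rw [this]
    obtain ⟨h1, h2, h3⟩ := h.choose_spec
    exact ⟨h1, h2, h3⟩
  have hgT : ∀ b ∈ T, g b ∈ E ∧ u ∈ g b ∧ b ∈ g b := fun b hb => hgspec b (hTsub b hb)
  have hginj : ∀ b ∈ T, ∀ b' ∈ T, g b = g b' → b = b' := by
    intro b hb b' hb' heq
    by_contra hne
    have hμne : μ b ≠ μ b' := fun h => hne (hμinj b hb b' hb' h)
    obtain ⟨hgE, hug, hbg⟩ := hgT b hb
    obtain ⟨-, -, hb'g⟩ := hgT b' hb'
    obtain ⟨hμE, huμ, hwμ, hbμ⟩ := hμprop b hb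
    obtain ⟨hμ'E, huμ', hwμ', hb'μ'⟩ := hμprop b' hb'
    have hbw : b ≠ w := fun h => hwn (h ▸ hTsub b hb)
    have hb'w : b' ≠ w := fun h => hwn (h ▸ hTsub b' hb')
    exact hC3 ⟨g b, hgE, μ b', hμ'E, μ b, hμE,
      b, b', w,
      (fun h => huμ' (h ▸ hug)), hμne.symm, (fun h => huμ (h ▸ hug)),
      hne, hb'w, hbw,
      hbg, heq ▸ hb'g, hb'μ', hwμ', hwμ, hbμ⟩
  apply hK
  refine ⟨{u, w}, T, fun a b => if a = u then g b else μ b, ?_, hTcard, ?_, ?_, ?_⟩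
  · rw [Finset.card_pair (Ne.symm hwu)]
  · rw [Finset.disjoint_left]
    intro a ha haT
    simp only [mem_insert, mem_singleton] at ha
    rcases ha with rfl | rfl
    · exact ((mem_nbrs'.mp (hTsub a haT)).1) rfl
    · exact hwn (hTsub a haT)
  · intro a ha b hb
    simp only [mem_insert, mem_singleton] at ha
    rcases ha with rfl | rfl
    · simp only [if_pos rfl]
      exact hgT b hb
    · simp only [if_neg hwu]
      obtain ⟨h1, h2, h3, h4⟩ := hμprop b hb
      exact ⟨h1, h3, h4⟩
  · intro a ha b hb a' ha' b' hb' heq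
    simp only [mem_insert, mem_singleton] at ha ha'
    rcases ha with rfl | rfl <;> rcases ha' with rfl | rfl
    · simp only [if_pos rfl] at heq
      exact ⟨rfl, hginj b hb b' hb' heq⟩
    · simp only [if_pos rfl, if_neg hwu] at heq
      exact absurd ((hμprop b' hb').2.1) (fun h => h (heq ▸ (hgT b hb).2.1))
    · simp only [if_pos rfl, if_neg hwu] at heq
      exact absurd ((hμprop b hb).2.1) (fun h => h (heq ▸ (hgT b' hb').2.1))
    · simp only [if_neg hwu] at heq
      exact ⟨rfl, hμinj b hb b' hb' heq⟩

end Aux13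

/-- neighborhood degree sum bound in Berge-K_{2,t}-free, Berge-C₃-free
linear hypergraphs. -/
theorem stmt13 {V : Type*} [Fintype V] [DecidableEq V]
    (E : Finset (Finset V)) (r t n : ℕ) (hr : 2 ≤ r) (ht : 2 ≤ t)
    (hn : Fintype.card V = n) (hU : Uniform E r) (hL : LinearH E)
    (hK : ¬ HasBergeKst E 2 t) (hC3 : ¬ HasBergeC3 E) (u : V) :
    ∑ v ∈ nbrs E u, (hdeg E v : ℝ) ≤
      ((r:ℝ) - (t:ℝ)) * (hdeg E u : ℝ) + ((t:ℝ) - 1) * ((n:ℝ) - 1) / ((r:ℝ) - 1) := by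
  classical
  set N := nbrs E u with hN
  set d := hdeg E u with hd
  set F := E.filter (fun e => u ∉ e ∧ (e ∩ N).Nonempty) with hF
  set W := (insert u N)ᶜ with hW
  -- Step 1: N.card = (r-1) * d
  have hbi : N = (E.filter (fun e => u ∈ e)).biUnion (fun e => e.erase u) := by
    ext x
    simp only [hN, mem_nbrs', Finset.mem_biUnion, Finset.mem_filter, Finset.mem_erase]
    constructor
    · rintro ⟨hxu, e, heE, hue, hxe⟩; exact ⟨e, ⟨heE, hue⟩, hxu, hxe⟩
    · rintro ⟨e, ⟨heE, hue⟩, hxu, hxe⟩; exact ⟨hxu, e, heE, hue, hxe⟩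
  have hdisj : ∀ e ∈ E.filter (fun e => u ∈ e), ∀ f ∈ E.filter (fun e => u ∈ e),
      e ≠ f → Disjoint (e.erase u) (f.erase u) := by
    intro e he f hf hef
    rw [Finset.mem_filter] at he hf
    rw [Finset.disjoint_left]
    intro x hx hx'
    rw [Finset.mem_erase] at hx hx'
    exact hef (uniq_edge' hL (Ne.symm hx.1) he.1 hf.1 he.2 hx.2 hf.2 hx'.2)
  have hNcard : N.card = (r - 1) * d := by
    rw [hbi, Finset.card_biUnion hdisj]
    have hcongr : ∀ e ∈ E.filter (fun e => u ∈ e), (e.erase u).card = r - 1 := by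
      intro e he
      rw [Finset.mem_filter] at he
      rw [Finset.card_erase_of_mem he.2, hU e he.1]
    rw [Finset.sum_congr rfl hcongr, Finset.sum_const, smul_eq_mul, mul_comm]
    rfl
  -- Step 2: sum of degrees
  have h2 : ∑ v ∈ N, hdeg E v = N.card + F.card := by
    have e1 : ∑ v ∈ N, hdeg E v = ∑ e ∈ E, (N ∩ e).card := by
      simp only [hdeg, Finset.card_filter]
      rw [Finset.sum_comm]
      refine Finset.sum_congr rfl fun e _ => ?_
      rw [← Finset.card_filter, Finset.filter_mem_eq_inter]
    rw [e1, ← Finset.sum_filter_add_sum_filter_not E (fun e => u ∈ e)]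
    congr 1
    · have hcongr : ∀ e ∈ E.filter (fun e => u ∈ e), (N ∩ e).card = r - 1 := by
        intro e he
        rw [Finset.mem_filter] at he
        have hEq : N ∩ e = e.erase u := by
          ext x
          simp only [Finset.mem_inter, hN, mem_nbrs', Finset.mem_erase]
          constructor
          · rintro ⟨⟨hxu, -⟩, hxe⟩; exact ⟨hxu, hxe⟩
          · rintro ⟨hxu, hxe⟩; exact ⟨⟨hxu, e, he.1, he.2, hxe⟩, hxe⟩
        rw [hEq, Finset.card_erase_of_mem he.2, hU e he.1]
      rw [Finset.sum_congr rfl hcongr, Finset.sum_const, smul_eq_mul, hNcard, mul_comm]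
      rfl
    · have hcongr : ∀ e ∈ E.filter (fun e => ¬ u ∈ e),
          (N ∩ e).card = if (e ∩ N).Nonempty then 1 else 0 := by
        intro e he
        rw [Finset.mem_filter] at he
        have hle : (e ∩ N).card ≤ 1 := atMostOne' hL hC3 he.1 he.2
        rw [Finset.inter_comm]
        by_cases hne : (e ∩ N).Nonempty
        · rw [if_pos hne]
          have := Finset.card_pos.mpr hne
          omega
        · rw [if_neg hne]
          rw [Finset.not_nonempty_iff_eq_empty] at hne
          rw [hne]
          rfl
      rw [Finset.sum_congr rfl hcongr, Finset.sum_filter, hF, Finset.card_filter]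
      refine Finset.sum_congr rfl fun e _ => ?_
      by_cases h1 : u ∈ e <;> by_cases hp : (e ∩ N).Nonempty <;> simp [h1, hp]
  -- Step 3
  have h3 : (r - 1) * F.card ≤ (t - 1) * W.card := by
    have e3 : (r - 1) * F.card = ∑ e ∈ F, (e ∩ W).card := by
      have hcongr : ∀ e ∈ F, (e ∩ W).card = r - 1 := by
        intro e he
        rw [hF, Finset.mem_filter] at he
        obtain ⟨heE, hue, hnem⟩ := he
        have h1 : e ∩ W = e \ insert u N := by
          ext x
          simp only [hW, Finset.mem_inter, Finset.mem_compl, Finset.mem_sdiff]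
        have hEq2 : e ∩ insert u N = e ∩ N := by
          ext x
          simp only [Finset.mem_inter, Finset.mem_insert]
          constructor
          · rintro ⟨hxe, rfl | hxN⟩
            · exact absurd hxe hue
            · exact ⟨hxe, hxN⟩
          · rintro ⟨hxe, hxN⟩; exact ⟨hxe, Or.inr hxN⟩
        have h4 : (e ∩ N).card = 1 :=
          le_antisymm (atMostOne' hL hC3 heE hue) (Finset.card_pos.mpr hnem)
        have h5 := Finset.card_sdiff_add_card_inter e (insert u N)
        rw [hEq2, h4, hU e heE] at h5
        rw [h1]
        omega
      rw [Finset.sum_congr rfl hcongr, Finset.sum_const, smul_eq_mul, mul_comm]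
    have e4 : ∑ e ∈ F, (e ∩ W).card = ∑ x ∈ W, (F.filter (fun e => x ∈ e)).card := by
      have hcongr : ∀ e ∈ F, (e ∩ W).card = ∑ x ∈ W, if x ∈ e then 1 else 0 := by
        intro e _
        rw [← Finset.card_filter, Finset.filter_mem_eq_inter, Finset.inter_comm]
      rw [Finset.sum_congr rfl hcongr, Finset.sum_comm]
      exact Finset.sum_congr rfl fun x _ => (Finset.card_filter _ _).symm
    have e5 : ∀ x ∈ W, (F.filter (fun e => x ∈ e)).card ≤ t - 1 := by
      intro x hx
      rw [hW, Finset.mem_compl, Finset.mem_insert] at hx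
      push_neg at hx
      have hfe : F.filter (fun e => x ∈ e)
          = E.filter (fun e => u ∉ e ∧ x ∈ e ∧ (e ∩ nbrs E u).Nonempty) := by
        rw [hF, Finset.filter_filter]
        ext e
        simp only [Finset.mem_filter, hN]
        tauto
      rw [hfe]
      exact key_bound' ht hL hK hC3 hx.1 hx.2
    calc (r - 1) * F.card = ∑ e ∈ F, (e ∩ W).card := e3
      _ = ∑ x ∈ W, (F.filter (fun e => x ∈ e)).card := e4
      _ ≤ ∑ _x ∈ W, (t - 1) := Finset.sum_le_sum e5
      _ = (t - 1) * W.card := by rw [Finset.sum_const, smul_eq_mul, mul_comm]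
  -- Step 4
  have h4 : W.card + ((r - 1) * d + 1) = n := by
    have hc := Finset.card_add_card_compl (insert u N)
    rw [Finset.card_insert_of_notMem (fun h => (mem_nbrs'.mp (hN ▸ h)).1 rfl), hNcard, hn] at hc
    rw [hW]
    omega
  -- assemble over ℝ
  have h1r : 1 ≤ r := by omega
  have h1t : 1 ≤ t := by omega
  have hsum : (∑ v ∈ N, (hdeg E v : ℝ)) = ((r : ℝ) - 1) * d + F.card := by
    rw [← Nat.cast_sum, h2, hNcard]
    push_cast [Nat.cast_sub h1r]
    ring
  have h3' : ((r : ℝ) - 1) * F.card ≤ ((t : ℝ) - 1) * W.card := by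
    have := (Nat.cast_le (α := ℝ)).mpr h3
    push_cast [Nat.cast_sub h1r, Nat.cast_sub h1t] at this
    exact this
  have h4' : (W.card : ℝ) + (((r : ℝ) - 1) * d + 1) = n := by
    have := congrArg (fun k : ℕ => (k : ℝ)) h4
    push_cast [Nat.cast_sub h1r] at this
    exact this
  have hpos : (0 : ℝ) < (r : ℝ) - 1 := by
    have : (2 : ℝ) ≤ (r : ℝ) := by exact_mod_cast hr
    linarith
  rw [hsum, ← sub_le_iff_le_add', le_div_iff₀ hpos]
  nlinarith [h3', h4']
end

section
/- For t ≥ 2, every n-vertex linear r-uniform hypergraph H that is Berge-K_{2,t}-free and Berge-C₃-free satisfies e(H) ≤ n·(√(4(t−1)(n−1) + (r−t)²) + r − t)/(2r(r−1)). -/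
open Finset

variable {V : Type*} [Fintype V] [DecidableEq V]

set_option linter.unusedSectionVars false
set_option maxHeartbeats 1000000

lemma edge_unique {E : Finset (Finset V)} (hL : LinearH E) {e₁ e₂ : Finset V}
    (h₁ : e₁ ∈ E) (h₂ : e₂ ∈ E) {u v : V} (huv : u ≠ v)
    (hu1 : u ∈ e₁) (hv1 : v ∈ e₁) (hu2 : u ∈ e₂) (hv2 : v ∈ e₂) : e₁ = e₂ := by
  by_contra hne
  have h := hL e₁ h₁ e₂ h₂ hne
  have hsub : ({u, v} : Finset V) ⊆ e₁ ∩ e₂ := by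
    intro x hx; simp at hx; rcases hx with rfl | rfl <;> simp [mem_inter, *]
  have := Finset.card_le_card hsub
  rw [Finset.card_pair huv] at this
  omega

lemma nbrs_eq_biUnion (E : Finset (Finset V)) (u : V) :
    nbrs E u = (E.filter (fun e => u ∈ e)).biUnion (fun e => e.erase u) := by
  ext v
  simp only [nbrs, mem_filter, mem_univ, true_and, mem_biUnion, mem_erase]
  constructor
  · rintro ⟨hv, e, he, hue, hve⟩; exact ⟨e, ⟨he, hue⟩, hv, hve⟩
  · rintro ⟨e, ⟨heE, hue⟩, hv, hve⟩; exact ⟨hv, e, heE, hue, hve⟩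

lemma nbrs_card {E : Finset (Finset V)} {r : ℕ} (hU : Uniform E r) (hL : LinearH E) (u : V) :
    (nbrs E u).card = (r - 1) * hdeg E u := by
  classical
  have hdisj : ∀ e₁ ∈ E.filter (fun e => u ∈ e), ∀ e₂ ∈ E.filter (fun e => u ∈ e),
      e₁ ≠ e₂ → Disjoint (e₁.erase u) (e₂.erase u) := by
    intro e₁ h₁ e₂ h₂ hne
    simp only [mem_filter] at h₁ h₂
    rw [Finset.disjoint_left]
    intro v hv₁ hv₂
    simp only [mem_erase] at hv₁ hv₂
    exact hne (edge_unique hL h₁.1 h₂.1 hv₁.1.symm h₁.2 hv₁.2 h₂.2 hv₂.2)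
  rw [nbrs_eq_biUnion, card_biUnion hdisj,
    Finset.sum_congr rfl (fun e he => by
      simp only [mem_filter] at he
      rw [card_erase_of_mem he.2, hU e he.1]),
    Finset.sum_const, smul_eq_mul, mul_comm]
  rfl

set_option maxHeartbeats 1000000

def Pu (E : Finset (Finset V)) (u : V) : Finset (Finset V × V × Finset V × V) :=
  (E.filter (fun e => u ∈ e)).biUnion (fun e =>
    (e.erase u).biUnion (fun v =>
      ((E.erase e).filter (fun e' => v ∈ e')).biUnion (fun e' =>
        (e'.erase v).image (fun w => (e, v, e', w)))))

lemma mem_Pu {E : Finset (Finset V)} {u : V} {p : Finset V × V × Finset V × V} :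
    p ∈ Pu E u ↔ p.1 ∈ E ∧ u ∈ p.1 ∧ p.2.1 ∈ p.1 ∧ p.2.1 ≠ u ∧
      p.2.2.1 ∈ E ∧ p.2.2.1 ≠ p.1 ∧ p.2.1 ∈ p.2.2.1 ∧ p.2.2.2 ∈ p.2.2.1 ∧ p.2.2.2 ≠ p.2.1 := by
  obtain ⟨e, v, e', w⟩ := p
  simp only [Pu, mem_biUnion, mem_image, mem_erase, mem_filter]
  constructor
  · rintro ⟨e₁, ⟨h1, h2⟩, v₁, ⟨h3, h4⟩, e₁', ⟨⟨h5, h6⟩, h7⟩, w₁, ⟨h8, h9⟩, heq⟩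
    obtain ⟨rfl, rfl, rfl, rfl⟩ := Prod.mk.injEq .. ▸ (by
      simpa using heq : e₁ = e ∧ v₁ = v ∧ e₁' = e' ∧ w₁ = w)
    exact ⟨h1, h2, h4, h3, h6, h5, h7, h9, h8⟩
  · rintro ⟨h1, h2, h3, h4, h5, h6, h7, h8, h9⟩
    exact ⟨e, ⟨h1, h2⟩, v, ⟨h4, h3⟩, e', ⟨⟨h6, h5⟩, h7⟩, w, ⟨h9, h8⟩, rfl⟩

lemma card_Pu {E : Finset (Finset V)} {r : ℕ} (hU : Uniform E r) (u : V) :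
    (Pu E u).card = ∑ e ∈ E.filter (fun e => u ∈ e), ∑ v ∈ e.erase u,
      (r - 1) * (hdeg E v - 1) := by
  rw [Pu, card_biUnion (by
    intro e₁ h₁ e₂ h₂ hne
    simp only [Finset.disjoint_left, mem_biUnion, mem_image]
    rintro p ⟨v₁, hv₁, e₁', he₁', w₁, hw₁, rfl⟩ ⟨v₂, hv₂, e₂', he₂', w₂, hw₂, heq⟩
    exact hne (congrArg Prod.fst heq).symm)]
  refine Finset.sum_congr rfl (fun e he => ?_)
  simp only [mem_filter] at he
  rw [card_biUnion (by
    intro v₁ h₁ v₂ h₂ hne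
    simp only [Finset.disjoint_left, mem_biUnion, mem_image]
    rintro p ⟨e₁', he₁', w₁, hw₁, rfl⟩ ⟨e₂', he₂', w₂, hw₂, heq⟩
    exact hne ((Prod.ext_iff.1 ((Prod.ext_iff.1 heq).2)).1).symm)]
  refine Finset.sum_congr rfl (fun v hv => ?_)
  simp only [mem_erase] at hv
  rw [card_biUnion (by
    intro a h₁ b h₂ hne
    simp only [Finset.disjoint_left, mem_image]
    rintro p ⟨w₁, hw₁, rfl⟩ ⟨w₂, hw₂, heq⟩
    exact hne ((Prod.ext_iff.1 ((Prod.ext_iff.1 ((Prod.ext_iff.1 heq).2)).2)).1).symm)]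
  have : ∀ e' ∈ (E.erase e).filter (fun e' => v ∈ e'),
      ((e'.erase v).image (fun w => (e, v, e', w))).card = r - 1 := by
    intro e' he'
    simp only [mem_filter, mem_erase] at he'
    rw [Finset.card_image_of_injective _ (by intro a b hab; exact (Prod.ext_iff.1 ((Prod.ext_iff.1 ((Prod.ext_iff.1 hab).2)).2)).2),
      card_erase_of_mem he'.2, hU e' he'.1.2]
  rw [Finset.sum_congr rfl this, Finset.sum_const, smul_eq_mul, mul_comm]
  congr 1
  rw [Finset.filter_erase, card_erase_of_mem]
  · rfl
  · simp only [mem_filter]; exact ⟨he.1, hv.2⟩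

open Classical in
/-- the set of "middle vertices" between u and w -/
noncomputable def midSet (E : Finset (Finset V)) (u w : V) : Finset V :=
  univ.filter (fun v => v ≠ u ∧ v ≠ w ∧ (∃ e ∈ E, u ∈ e ∧ v ∈ e) ∧ ∃ e ∈ E, v ∈ e ∧ w ∈ e)

lemma middle_small {E : Finset (Finset V)} {t : ℕ}
    (hL : LinearH E) (hK : ¬ HasBergeKst E 2 t) (hC3 : ¬ HasBergeC3 E)
    {u w : V} (huw : u ≠ w) (hno : ∀ e ∈ E, ¬(u ∈ e ∧ w ∈ e)) :
    (midSet E u w).card < t := by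
  classical
  by_contra hge
  push_neg at hge
  obtain ⟨T, hTsub, hTcard⟩ := Finset.exists_subset_card_eq hge
  -- define f
  set f : V → V → Finset V := fun a b =>
    if h : ∃ e ∈ E, a ∈ e ∧ b ∈ e then h.choose else ∅ with hf
  have fspec : ∀ a b, (∃ e ∈ E, a ∈ e ∧ b ∈ e) → f a b ∈ E ∧ a ∈ f a b ∧ b ∈ f a b := by
    intro a b h
    rw [hf]; simp only [dif_pos h]
    obtain ⟨h1, h2, h3⟩ := h.choose_spec
    exact ⟨h1, h2, h3⟩
  have hmidT : ∀ b ∈ T, b ≠ u ∧ b ≠ w ∧ (∃ e ∈ E, u ∈ e ∧ b ∈ e) ∧ ∃ e ∈ E, b ∈ e ∧ w ∈ e := by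
    intro b hb
    have := hTsub hb
    simpa [midSet] using this
  have hwex : ∀ b ∈ T, ∃ e ∈ E, w ∈ e ∧ b ∈ e := by
    intro b hb
    obtain ⟨e, he, h1, h2⟩ := (hmidT b hb).2.2.2
    exact ⟨e, he, h2, h1⟩
  have huex : ∀ b ∈ T, ∃ e ∈ E, u ∈ e ∧ b ∈ e := fun b hb => (hmidT b hb).2.2.1
  -- key: no edge contains a ∈ {u,w} and two distinct b, b' of T
  have key : ∀ (a : V), (a = u ∨ a = w) → ∀ b ∈ T, ∀ b' ∈ T, b ≠ b' →
      ∀ g ∈ E, a ∈ g → b ∈ g → b' ∈ g → False := by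
    rintro a ha b hb b' hb' hbb' g hg hag hbg hb'g
    -- the "other endpoint"
    obtain ⟨c, hc, hother⟩ : ∃ c, (c = u ∨ c = w) ∧ c ≠ a := by
      rcases ha with rfl | rfl
      exacts [⟨w, Or.inr rfl, huw.symm⟩, ⟨u, Or.inl rfl, huw⟩]
    have hcnotg : c ∉ g := by
      intro hcg
      rcases ha with rfl | rfl <;> rcases hc with rfl | rfl <;>
        first | exact hother rfl | exact hno g hg ⟨hag, hcg⟩ | exact hno g hg ⟨hcg, hag⟩
    -- edges from c to b and b'
    have h1 : ∃ e ∈ E, c ∈ e ∧ b ∈ e := by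
      rcases hc with rfl | rfl
      exacts [huex b hb, hwex b hb]
    have h2 : ∃ e ∈ E, c ∈ e ∧ b' ∈ e := by
      rcases hc with rfl | rfl
      exacts [huex b' hb', hwex b' hb']
    obtain ⟨h₁, hE1, hcb1, hb1⟩ := h1
    obtain ⟨h₂, hE2, hcb2, hb2⟩ := h2
    have hbc : b ≠ c := by rintro rfl; exact hcnotg hbg
    have hb'c : b' ≠ c := by rintro rfl; exact hcnotg hb'g
    have hg1 : g ≠ h₁ := by rintro rfl; exact hcnotg hcb1
    have hg2 : g ≠ h₂ := by rintro rfl; exact hcnotg hcb2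
    have h12 : h₁ ≠ h₂ := by
      rintro rfl
      -- h₁ contains b, b', c ; g contains b, b', a; g ≠ h₁
      have hsub : ({b, b'} : Finset V) ⊆ g ∩ h₁ := by
        intro x hx; simp at hx; rcases hx with rfl | rfl <;> simp [mem_inter, *]
      have := Finset.card_le_card hsub
      rw [Finset.card_pair hbb'] at this
      have := hL g hg h₁ hE1 hg1
      omega
    exact hC3 ⟨g, hg, h₂, hE2, h₁, hE1, b, b', c, hg2, (Ne.symm h12), hg1, hbb', hb'c, hbc,
      hbg, hb'g, hb2, hcb2, hcb1, hb1⟩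
  -- f conditions
  have hcond : ∀ a ∈ ({u, w} : Finset V), ∀ b ∈ T, f a b ∈ E ∧ a ∈ f a b ∧ b ∈ f a b := by
    intro a ha b hb
    simp only [mem_insert, mem_singleton] at ha
    apply fspec
    rcases ha with rfl | rfl
    exacts [huex b hb, hwex b hb]
  have hinj : ∀ a ∈ ({u, w} : Finset V), ∀ b ∈ T, ∀ a' ∈ ({u, w} : Finset V), ∀ b' ∈ T,
      f a b = f a' b' → a = a' ∧ b = b' := by
    intro a ha b hb a' ha' b' hb' heq
    simp only [mem_insert, mem_singleton] at ha ha'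
    obtain ⟨hE1, ha1, hb1⟩ := hcond a (by simp [ha]) b hb
    obtain ⟨hE2, ha2, hb2⟩ := hcond a' (by simp [ha']) b' hb'
    rw [heq] at ha1 hb1
    -- f a' b' contains a, b, a', b'
    have haa' : a = a' := by
      by_contra hne
      have : (a = u ∧ a' = w) ∨ (a = w ∧ a' = u) := by
        rcases ha with rfl | rfl <;> rcases ha' with rfl | rfl <;> simp_all
      rcases this with ⟨rfl, rfl⟩ | ⟨rfl, rfl⟩
      · exact hno _ hE2 ⟨ha1, ha2⟩
      · exact hno _ hE2 ⟨ha2, ha1⟩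
    refine ⟨haa', ?_⟩
    by_contra hne
    exact key a ha b hb b' hb' hne (f a' b') hE2 ha1 hb1 hb2
  -- assemble the Berge K_{2,t}
  apply hK
  refine ⟨{u, w}, T, f, ?_, hTcard, ?_, hcond, hinj⟩
  · rw [Finset.card_pair huw]
  · rw [Finset.disjoint_left]
    intro x hx hxT
    simp only [mem_insert, mem_singleton] at hx
    rcases hx with rfl | rfl
    · exact (hmidT x hxT).1 rfl
    · exact (hmidT x hxT).2.1 rfl

lemma w_far {E : Finset (Finset V)} (hL : LinearH E) (hC3 : ¬ HasBergeC3 E) {u : V}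
    {p : Finset V × V × Finset V × V} (hp : p ∈ Pu E u) :
    p.2.2.2 ≠ u ∧ ∀ e'' ∈ E, ¬(u ∈ e'' ∧ p.2.2.2 ∈ e'') := by
  obtain ⟨h1, h2, h3, h4, h5, h6, h7, h8, h9⟩ := mem_Pu.1 hp
  obtain ⟨e, v, e', w⟩ := p
  simp only at h1 h2 h3 h4 h5 h6 h7 h8 h9 ⊢
  have hue' : u ∉ e' := by
    intro hu
    exact h6 (edge_unique hL h5 h1 (Ne.symm h4) hu h7 h2 h3)
  have hwe : w ∉ e := by
    intro hw
    exact h6 (edge_unique hL h5 h1 (Ne.symm h9) h7 h8 h3 hw)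
  have hwu : w ≠ u := by rintro rfl; exact hue' h8
  refine ⟨hwu, ?_⟩
  rintro e'' he'' ⟨hue'', hwe''⟩
  have he''e' : e'' ≠ e' := by rintro rfl; exact hue' hue''
  have he''e : e'' ≠ e := by rintro rfl; exact hwe hwe''
  exact hC3 ⟨e, h1, e', h5, e'', he'', u, v, w, Ne.symm h6, Ne.symm he''e', he''e.symm,
    Ne.symm h4, Ne.symm h9, hwu.symm, h2, h3, h7, h8, hwe'', hue''⟩

lemma card_Pu_le {E : Finset (Finset V)} {t : ℕ} (hL : LinearH E)
    (hK : ¬ HasBergeKst E 2 t) (hC3 : ¬ HasBergeC3 E) (u : V) :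
    (Pu E u).card ≤ (t - 1) * (univ \ insert u (nbrs E u)).card := by
  classical
  calc (Pu E u).card ≤ (t-1) * ((Pu E u).image (fun p => p.2.2.2)).card := by
        apply Finset.card_le_mul_card_image
        intro w hw
        obtain ⟨p₀, hp₀, hp₀w⟩ := Finset.mem_image.1 hw
        obtain ⟨hwu, hno⟩ := w_far hL hC3 hp₀
        rw [hp₀w] at hwu hno
        have hmid : (midSet E u w).card < t := middle_small hL hK hC3 (Ne.symm hwu) hno
        have : ((Pu E u).filter (fun p => p.2.2.2 = w)).card ≤ (midSet E u w).card := by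
          apply Finset.card_le_card_of_injOn (fun p => p.2.1)
          · intro p hp
            simp only [mem_coe, mem_filter] at hp
            obtain ⟨hpPu, hpw⟩ := hp
            obtain ⟨h1, h2, h3, h4, h5, h6, h7, h8, h9⟩ := mem_Pu.1 hpPu
            rw [hpw] at h8 h9
            simp only [midSet, mem_coe, mem_filter, mem_univ, true_and]
            exact ⟨h4, Ne.symm h9, ⟨p.1, h1, h2, h3⟩, ⟨p.2.2.1, h5, h7, h8⟩⟩
          · intro p hp q hq hpq
            simp only [coe_filter, Set.mem_setOf_eq] at hp hq
            obtain ⟨hpPu, hpw⟩ := hp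
            obtain ⟨hqPu, hqw⟩ := hq
            obtain ⟨p1, p2, p3, p4, p5, p6, p7, p8, p9⟩ := mem_Pu.1 hpPu
            obtain ⟨q1, q2, q3, q4, q5, q6, q7, q8, q9⟩ := mem_Pu.1 hqPu
            simp only at hpq
            have he : p.1 = q.1 := by
              apply edge_unique hL p1 q1 (Ne.symm p4) p2 p3 q2
              rw [hpq]; exact q3
            have hvw : p.2.1 ≠ w := by rw [hpw] at p9; exact Ne.symm p9
            have he' : p.2.2.1 = q.2.2.1 := by
              apply edge_unique hL p5 q5 hvw p7
              · rw [hpw] at p8; exact p8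
              · rw [hpq]; exact q7
              · rw [hqw] at q8; exact q8
            have hw2 : p.2.2.2 = q.2.2.2 := by rw [hpw, hqw]
            exact Prod.ext he (Prod.ext hpq (Prod.ext he' hw2))
        omega
    _ ≤ (t-1) * (univ \ insert u (nbrs E u)).card := by
        apply Nat.mul_le_mul_left
        apply Finset.card_le_card
        intro w hw
        obtain ⟨p₀, hp₀, hp₀w⟩ := Finset.mem_image.1 hw
        obtain ⟨hwu, hno⟩ := w_far hL hC3 hp₀
        rw [hp₀w] at hwu hno
        simp only [mem_sdiff, mem_univ, true_and, mem_insert, not_or]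
        refine ⟨hwu, ?_⟩
        simp only [nbrs, mem_filter, mem_univ, true_and, not_and, not_exists]
        intro _ e he hue hwe
        exact hno e he ⟨hue, hwe⟩

lemma sum_filter_swap (E : Finset (Finset V)) (F : V → Finset V → ℝ) :
    ∑ u : V, ∑ e ∈ E.filter (fun e => u ∈ e), F u e = ∑ e ∈ E, ∑ u ∈ e, F u e := by
  simp_rw [Finset.sum_filter]
  rw [Finset.sum_comm]
  refine Finset.sum_congr rfl fun e he => ?_
  rw [← Finset.sum_filter]
  congr 1
  ext u; simp

lemma sum_over_edges (E : Finset (Finset V)) (f : V → ℝ) :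
    ∑ e ∈ E, ∑ v ∈ e, f v = ∑ v : V, (hdeg E v : ℝ) * f v := by
  have h1 : ∀ e ∈ E, ∑ v ∈ e, f v = ∑ v : V, if v ∈ e then f v else 0 := by
    intro e he
    rw [← Finset.sum_filter]
    congr 1
    ext v; simp
  rw [Finset.sum_congr rfl h1, Finset.sum_comm]
  refine Finset.sum_congr rfl fun v _ => ?_
  rw [← Finset.sum_filter, Finset.sum_const, hdeg, nsmul_eq_mul]

lemma inner_swap (e : Finset V) (c : V → ℝ) :
    ∑ u ∈ e, ∑ v ∈ e.erase u, c v = ((e.card : ℝ) - 1) * ∑ v ∈ e, c v := by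
  have h : ∀ u ∈ e, ∑ v ∈ e.erase u, c v = (∑ v ∈ e, c v) - c u :=
    fun u hu => Finset.sum_erase_eq_sub hu
  rw [Finset.sum_congr rfl h, Finset.sum_sub_distrib, Finset.sum_const, nsmul_eq_mul]
  ring

/-- edge bound for Berge-K_{2,t}-free, Berge-C₃-free linear
hypergraphs. -/
theorem stmt16 {V : Type*} [Fintype V] [DecidableEq V]
    (E : Finset (Finset V)) (r t n : ℕ) (hr : 2 ≤ r) (ht : 2 ≤ t)
    (hn : Fintype.card V = n) (hU : Uniform E r) (hL : LinearH E)
    (hK : ¬ HasBergeKst E 2 t) (hC3 : ¬ HasBergeC3 E) :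
    (E.card : ℝ) ≤ (n:ℝ) *
      ((Real.sqrt (4 * ((t:ℝ) - 1) * ((n:ℝ) - 1) + ((r:ℝ) - (t:ℝ)) ^ 2) + (r:ℝ) - (t:ℝ)) /
        (2 * (r:ℝ) * ((r:ℝ) - 1))) := by
  classical
  rcases Nat.eq_zero_or_pos n with hn0 | hnpos
  · -- n = 0 : no vertices, so no edges
    have hE : E = ∅ := by
      ext e
      simp only [Finset.notMem_empty, iff_false]
      intro he
      have h1 : e.card = r := hU e he
      have h2 : e ⊆ univ := subset_univ e
      have h3 : e.card ≤ Fintype.card V := by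
        simpa [card_univ] using Finset.card_le_card h2
      omega
    subst hn0
    simp [hE]
  -- main case: n ≥ 1
  have hn1 : (1:ℝ) ≤ (n:ℝ) := by exact_mod_cast hnpos
  have hr2 : (2:ℝ) ≤ (r:ℝ) := by exact_mod_cast hr
  have ht2 : (2:ℝ) ≤ (t:ℝ) := by exact_mod_cast ht
  set R : ℝ := (r:ℝ) with hR
  set T : ℝ := (t:ℝ) with hT
  set N : ℝ := (n:ℝ) with hN
  set M : ℝ := (E.card : ℝ) with hM
  have hM0 : 0 ≤ M := by positivity
  set A : ℝ := ∑ v : V, (hdeg E v : ℝ) with hA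
  set B : ℝ := ∑ v : V, (hdeg E v : ℝ)^2 with hB
  -- handshake: A = R * M
  have hAval : A = R * M := by
    have h2 : ∑ e ∈ E, ((e.card : ℝ)) = A := by
      rw [hA]
      simpa using sum_over_edges E (fun _ => 1)
    rw [← h2, Finset.sum_congr rfl (fun e he => by rw [hU e he]), Finset.sum_const,
      nsmul_eq_mul, mul_comm]
  -- exact count of the walk structures
  have hcast : ∀ u : V, ((Pu E u).card : ℝ) =
      ∑ e ∈ E.filter (fun e => u ∈ e), ∑ v ∈ e.erase u, (R - 1) * ((hdeg E v : ℝ) - 1) := by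
    intro u
    rw [card_Pu hU u, Nat.cast_sum]
    refine Finset.sum_congr rfl fun e he => ?_
    rw [Nat.cast_sum]
    refine Finset.sum_congr rfl fun v hv => ?_
    simp only [mem_filter] at he
    simp only [mem_erase] at hv
    have hd1 : 1 ≤ hdeg E v := by
      have : e ∈ E.filter (fun e => v ∈ e) := by
        simp only [mem_filter]
        exact ⟨he.1, hv.2⟩
      exact Finset.card_pos.2 ⟨e, this⟩
    rw [Nat.cast_mul, Nat.cast_sub (by omega : 1 ≤ r), Nat.cast_sub hd1, Nat.cast_one]
  have hcount : ∑ u : V, ((Pu E u).card : ℝ) = (R-1)^2 * (B - A) := by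
    rw [Finset.sum_congr rfl (fun u _ => hcast u), sum_filter_swap,
      Finset.sum_congr rfl (fun e he => inner_swap e _),
      Finset.sum_congr rfl (fun e he => by rw [hU e he]),
      ← Finset.mul_sum, sum_over_edges, hB, hA, ← Finset.sum_sub_distrib, Finset.mul_sum,
      Finset.mul_sum]
    refine Finset.sum_congr rfl fun v _ => ?_
    ring
  -- upper bound for each u
  have per : ∀ u : V, ((Pu E u).card : ℝ) ≤ (T-1) * ((N-1) - (R-1)*(hdeg E u : ℝ)) := by
    intro u
    have hu_nmem : u ∉ nbrs E u := by simp [nbrs]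
    have hins : (insert u (nbrs E u)).card = (r-1) * hdeg E u + 1 := by
      rw [Finset.card_insert_of_notMem hu_nmem, nbrs_card hU hL]
    have hle : (r-1) * hdeg E u + 1 ≤ n := by
      have h1 : (insert u (nbrs E u)).card ≤ Fintype.card V := by
        simpa [card_univ] using Finset.card_le_card (subset_univ (insert u (nbrs E u)))
      omega
    have hsd : (univ \ insert u (nbrs E u)).card = n - ((r-1) * hdeg E u + 1) := by
      rw [Finset.card_sdiff_of_subset (subset_univ _), card_univ, hn, hins]
    calc ((Pu E u).card : ℝ)
        ≤ (((t-1) * (univ \ insert u (nbrs E u)).card : ℕ) : ℝ) :=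
          Nat.cast_le.2 (card_Pu_le hL hK hC3 u)
      _ = (T-1) * (N - (((R-1)*(hdeg E u : ℝ)) + 1)) := by
          rw [hsd, Nat.cast_mul, Nat.cast_sub hle, Nat.cast_sub (by omega : 1 ≤ t),
            Nat.cast_add, Nat.cast_mul, Nat.cast_sub (by omega : 1 ≤ r)]
          push_cast
          rw [hR, hT, hN]
      _ = (T-1) * ((N-1) - (R-1)*(hdeg E u : ℝ)) := by ring
  have hup : ∑ u : V, ((Pu E u).card : ℝ) ≤ (T-1) * (N*(N-1) - (R-1)*A) := by
    calc ∑ u : V, ((Pu E u).card : ℝ)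
        ≤ ∑ u : V, (T-1) * ((N-1) - (R-1)*(hdeg E u : ℝ)) :=
          Finset.sum_le_sum (fun u _ => per u)
      _ = (T-1) * (N*(N-1) - (R-1)*A) := by
          rw [← Finset.mul_sum, Finset.sum_sub_distrib, Finset.sum_const, ← Finset.mul_sum,
            ← hA, card_univ, hn, nsmul_eq_mul]
  have h1 : (R-1)^2 * (B - A) ≤ (T-1) * (N*(N-1) - (R-1)*A) := hcount ▸ hup
  -- Cauchy–Schwarz
  have hCS : A^2 ≤ N * B := by
    have := sq_sum_le_card_mul_sum_sq (s := (univ : Finset V)) (f := fun v => (hdeg E v : ℝ))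
    simpa [card_univ, hn, ← hA, ← hB] using this
  have hN0 : (0:ℝ) ≤ N := by linarith
  have key : R*(R-1)*M*(R*(R-1)*M - (R-T)*N) ≤ (T-1)*(N-1)*N^2 := by
    have h1' := mul_le_mul_of_nonneg_left h1 hN0
    have h3' := mul_le_mul_of_nonneg_left hCS (sq_nonneg (R-1))
    rw [hAval] at h1' h3'
    nlinarith [h1', h3']
  set D : ℝ := 4 * (T - 1) * (N - 1) + (R - T)^2 with hD
  have hx2 : (2*R*(R-1)*M - (R-T)*N)^2 ≤ N^2 * D := by
    rw [hD]; nlinarith [key]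
  have hxle : 2*R*(R-1)*M - (R-T)*N ≤ N * Real.sqrt D := by
    calc 2*R*(R-1)*M - (R-T)*N ≤ |2*R*(R-1)*M - (R-T)*N| := le_abs_self _
      _ = Real.sqrt ((2*R*(R-1)*M - (R-T)*N)^2) := (Real.sqrt_sq_eq_abs _).symm
      _ ≤ Real.sqrt (N^2 * D) := Real.sqrt_le_sqrt hx2
      _ = N * Real.sqrt D := by
          rw [Real.sqrt_mul (sq_nonneg N), Real.sqrt_sq hN0]
  have hc : (0:ℝ) < 2 * R * (R - 1) := by nlinarith
  rw [show (n:ℝ) * ((Real.sqrt (4 * ((t:ℝ) - 1) * ((n:ℝ) - 1) + ((r:ℝ) - (t:ℝ)) ^ 2) + (r:ℝ) - (t:ℝ)) /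
        (2 * (r:ℝ) * ((r:ℝ) - 1))) = (N * (Real.sqrt D + R - T)) / (2 * R * (R-1)) by
      rw [hD, hR, hT, hN]; ring]
  rw [le_div_iff₀ hc]
  nlinarith [hxle]
end

section
/- Let H be an hm-bipartite linear r-uniform hypergraph with head part V₁ and mass part V₂, and let u ∈ V₂. Then the number of edges of the induced subhypergraph H_u = H[N_{V₁}(u) ∪ (V₂ \ {u})] equals ∑_{v ∈ N_{V₁}(u)} d(v) − d(u), where N_{V₁}(u) = N(u) ∩ V₁. -/
open Finset

variable {V : Type*} [Fintype V] [DecidableEq V]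

/-- edge count of the induced subhypergraph `H_u`. -/
theorem stmt19 {V : Type*} [Fintype V] [DecidableEq V]
    (E : Finset (Finset V)) (r : ℕ) (V₁ V₂ : Finset V)
    (hU : Uniform E r) (hL : LinearH E) (hbi : HmBipartite E r V₁ V₂)
    (u : V) (hu : u ∈ V₂) :
    (E.filter (fun e => e ⊆ (nbrs E u ∩ V₁) ∪ (V₂ \ {u}))).card + hdeg E u =
      ∑ v ∈ nbrs E u ∩ V₁, hdeg E v :=  by
  classical
  obtain ⟨hdisj, hcov, hedge⟩ := hbi
  set S := nbrs E u ∩ V₁ with hS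
  set T := S ∪ (V₂ \ {u}) with hT
  have huT : u ∉ T := by
    intro h
    rcases Finset.mem_union.mp h with h' | h'
    · exact Finset.disjoint_left.mp hdisj (Finset.mem_inter.mp h').2 hu
    · exact (Finset.mem_sdiff.mp h').2 (Finset.mem_singleton_self u)
  have key : ∀ e ∈ E, (S ∩ e).card = if u ∈ e ∨ e ⊆ T then 1 else 0 := by
    intro e he
    obtain ⟨h1, h2⟩ := hedge e he
    obtain ⟨v, hv⟩ := Finset.card_eq_one.mp h1
    have hvm : v ∈ e ∩ V₁ := hv ▸ Finset.mem_singleton_self v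
    have hve : v ∈ e := (Finset.mem_inter.mp hvm).1
    have hvV₁ : v ∈ V₁ := (Finset.mem_inter.mp hvm).2
    have hvu : v ≠ u := fun h => Finset.disjoint_left.mp hdisj hvV₁ (h ▸ hu)
    have hSe : S ∩ e = if v ∈ nbrs E u then {v} else ∅ := by
      ext x
      constructor
      · intro hx
        simp only [hS, Finset.mem_inter, Finset.inter_assoc] at hx
        obtain ⟨hxn, hxV₁, hxe⟩ := hx
        have hx' : x ∈ e ∩ V₁ := Finset.mem_inter.mpr ⟨hxe, hxV₁⟩
        rw [hv, Finset.mem_singleton] at hx'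
        subst hx'
        simp [hxn]
      · intro hx
        by_cases hvn : v ∈ nbrs E u
        · simp only [hvn, if_true, Finset.mem_singleton] at hx
          subst hx
          simp only [hS, Finset.mem_inter]
          exact ⟨⟨hvn, hvV₁⟩, hve⟩
        · simp [hvn] at hx
    by_cases hue : u ∈ e
    · have hvn : v ∈ nbrs E u := by
        simp only [nbrs, Finset.mem_filter, Finset.mem_univ, true_and]
        exact ⟨hvu, e, he, hue, hve⟩
      simp [hSe, hvn, hue]
    · by_cases hvn : v ∈ nbrs E u
      · have het : e ⊆ T := by
          intro w hw
          have hwu : w ∈ V₁ ∪ V₂ := hcov ▸ Finset.mem_univ w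
          rcases Finset.mem_union.mp hwu with h | h
          · have hw' : w ∈ e ∩ V₁ := Finset.mem_inter.mpr ⟨hw, h⟩
            rw [hv, Finset.mem_singleton] at hw'
            subst hw'
            exact Finset.mem_union_left _ (Finset.mem_inter.mpr ⟨hvn, hvV₁⟩)
          · refine Finset.mem_union_right _ (Finset.mem_sdiff.mpr ⟨h, ?_⟩)
            simp only [Finset.mem_singleton]
            rintro rfl
            exact hue hw
        simp [hSe, hvn, hue, het]
      · have het : ¬ e ⊆ T := by
          intro h
          rcases Finset.mem_union.mp (h hve) with h' | h'
          · exact hvn (Finset.mem_inter.mp h').1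
          · exact Finset.disjoint_left.mp hdisj hvV₁ (Finset.mem_sdiff.mp h').1
        simp [hSe, hvn, hue, het]
  have hsum : ∑ v ∈ S, hdeg E v = ∑ e ∈ E, (S ∩ e).card := by
    unfold hdeg
    simp_rw [Finset.card_filter]
    rw [Finset.sum_comm]
    refine Finset.sum_congr rfl fun e _ => ?_
    rw [← Finset.card_filter, Finset.filter_mem_eq_inter]
  have hdisjf : Disjoint (E.filter (fun e => u ∈ e)) (E.filter (fun e => e ⊆ T)) := by
    rw [Finset.disjoint_left]
    intro e h1 h2
    exact huT ((Finset.mem_filter.mp h2).2 (Finset.mem_filter.mp h1).2)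
  rw [hsum, Finset.sum_congr rfl key, ← Finset.card_filter, Finset.filter_or,
    Finset.card_union_of_disjoint hdisjf, Nat.add_comm]
  simp [hdeg]
end
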